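/- arXiv:1505.00879 — 5 statements merged into one kernel-verified Lean document; each statement's English description precedes it below -/
import Mathlib

section
/- Let $f : [0,T] \times [-M,M] \to \mathbb{R}$ satisfy $RV^{p,q}(f) < \infty$ for some $p, q \ge 1$. Let $p' > p$ and $q' = (p'/p) q$. Then $RV^{p',q'}(f) \le \big( \sup_{t,s,x,y} |\Delta f(t,s;x,y)| \big)^{(p'-p)/p'} \cdot \big( RV^{p,q}(f) \big)^{q/q'}$. -/
open Set Finset Filter MeasureTheory
open scoped ENNReal NNReal

/-- `t` is a (monotone) partition of `[a, b]` with `n` subintervals. -/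
def IsPartition {n : ℕ} (a b : ℝ) (t : Fin (n + 1) → ℝ) : Prop :=
  Monotone t ∧ t 0 = a ∧ t (Fin.last n) = b

/-- The rectangular increment `Δ f(t,s;x,y) = f t x - f t y - (f s x - f s y)`. -/
def rectInc (f : ℝ → ℝ → ℝ) (t s x y : ℝ) : ℝ :=
  f t x - f t y - (f s x - f s y)

/-- The `p`-variation sum supremum `‖g‖_{[a,b];p}^p` (as an extended nonnegative real). -/
noncomputable def pVar (p a b : ℝ) (g : ℝ → ℝ) : ℝ≥0∞ :=
  ⨆ (n : ℕ) (x : Fin (n + 1) → ℝ) (_ : IsPartition a b x),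
    ∑ i : Fin n, (ENNReal.ofReal |g (x i.succ) - g (x i.castSucc)|) ^ p

/-- The joint left `(r,s)`-variation
`LV^{r,s}(f) = sup_π [ ∑_j ( ∑_i |Δ_iΔ_j f(t_i, x_j)|^r )^{s/r} ]^{1/s}`
over grid partitions of `[t₀,t₁] × [x₀,x₁]` (inner sum over the time index). -/
noncomputable def LV (r s t₀ t₁ x₀ x₁ : ℝ) (f : ℝ → ℝ → ℝ) : ℝ≥0∞ :=
  ⨆ (n : ℕ) (m : ℕ) (t : Fin (n + 1) → ℝ) (x : Fin (m + 1) → ℝ)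
    (_ : IsPartition t₀ t₁ t) (_ : IsPartition x₀ x₁ x),
    (∑ j : Fin m, (∑ i : Fin n,
      (ENNReal.ofReal
        |rectInc f (t i.succ) (t i.castSucc) (x j.succ) (x j.castSucc)|) ^ r) ^ (s / r)) ^ (1 / s)

/-- The joint right `(p,q)`-variation
`RV^{p,q}(f) = sup_π [ ∑_i ( ∑_j |Δ_iΔ_j f(t_i, x_j)|^p )^{q/p} ]^{1/q}`
over grid partitions of `[t₀,t₁] × [x₀,x₁]` (inner sum over the space index). -/
noncomputable def RV (p q t₀ t₁ x₀ x₁ : ℝ) (f : ℝ → ℝ → ℝ) : ℝ≥0∞ :=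
  ⨆ (n : ℕ) (m : ℕ) (t : Fin (n + 1) → ℝ) (x : Fin (m + 1) → ℝ)
    (_ : IsPartition t₀ t₁ t) (_ : IsPartition x₀ x₁ x),
    (∑ i : Fin n, (∑ j : Fin m,
      (ENNReal.ofReal
        |rectInc f (t i.succ) (t i.castSucc) (x j.succ) (x j.castSucc)|) ^ p) ^ (q / p)) ^ (1 / q)

/-- Interpolation inequality for the joint right variation:
if `RV^{p,q}(f) < ∞`, `p' > p` and `q' = (p'/p)·q`, then
`RV^{p',q'}(f) ≤ (sup |Δf|)^{(p'-p)/p'} · (RV^{p,q}(f))^{q/q'}`. -/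
theorem stmt3 (T M p q p' q' : ℝ) (hT : 0 < T) (hM : 0 < M)
    (hp : 1 ≤ p) (hq : 1 ≤ q) (hp' : p < p') (hq' : q' = (p' / p) * q)
    (f : ℝ → ℝ → ℝ) (hfin : RV p q 0 T (-M) M f ≠ ⊤) :
    RV p' q' 0 T (-M) M f ≤
      (⨆ (t ∈ Set.Icc (0:ℝ) T) (s ∈ Set.Icc (0:ℝ) T)
        (x ∈ Set.Icc (-M) M) (y ∈ Set.Icc (-M) M),
          ENNReal.ofReal |rectInc f t s x y|) ^ ((p' - p) / p') *
      (RV p q 0 T (-M) M f) ^ (q / q') := by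

  have hp0 : (0:ℝ) < p := lt_of_lt_of_le one_pos hp
  have hq0 : (0:ℝ) < q := lt_of_lt_of_le one_pos hq
  have hp'0 : (0:ℝ) < p' := hp0.trans hp'
  have hq'0 : (0:ℝ) < q' := by rw [hq']; positivity
  set S := (⨆ (t ∈ Set.Icc (0:ℝ) T) (s ∈ Set.Icc (0:ℝ) T)
      (x ∈ Set.Icc (-M) M) (y ∈ Set.Icc (-M) M),
      ENNReal.ofReal |rectInc f t s x y|) with hS
  rw [RV]
  refine iSup_le fun n => iSup_le fun m => iSup_le fun t => iSup_le fun x =>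
    iSup_le fun ht => iSup_le fun hx => ?_
  have htmem : ∀ k : Fin (n+1), t k ∈ Set.Icc (0:ℝ) T := fun k =>
    ⟨ht.2.1 ▸ ht.1 (Fin.zero_le k), ht.2.2 ▸ ht.1 (Fin.le_last k)⟩
  have hxmem : ∀ k : Fin (m+1), x k ∈ Set.Icc (-M) M := fun k =>
    ⟨hx.2.1 ▸ hx.1 (Fin.zero_le k), hx.2.2 ▸ hx.1 (Fin.le_last k)⟩
  set a : Fin n → Fin m → ℝ≥0∞ := fun i j =>
    ENNReal.ofReal |rectInc f (t i.succ) (t i.castSucc) (x j.succ) (x j.castSucc)| with ha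
  have hle : ∀ (i : Fin n) (j : Fin m), a i j ≤ S := by
    intro i j
    rw [hS]
    exact le_iSup_of_le (t i.succ) (le_iSup_of_le (htmem _) (le_iSup_of_le (t i.castSucc)
      (le_iSup_of_le (htmem _) (le_iSup_of_le (x j.succ) (le_iSup_of_le (hxmem _)
      (le_iSup_of_le (x j.castSucc) (le_iSup_of_le (hxmem _) le_rfl)))))))
  have h1 : ∀ i : Fin n, ∑ j : Fin m, (a i j) ^ p' ≤ S ^ (p' - p) * ∑ j : Fin m, (a i j) ^ p := by
    intro i
    rw [Finset.mul_sum]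
    refine Finset.sum_le_sum fun j _ => ?_
    have he : (a i j) ^ p' = (a i j) ^ (p' - p) * (a i j) ^ p := by
      rw [← ENNReal.rpow_add_of_nonneg (p' - p) p (by linarith) hp0.le, sub_add_cancel]
    rw [he]
    exact mul_le_mul' (ENNReal.rpow_le_rpow (hle i j) (by linarith)) le_rfl
  have hqp : q' / p' = q / p := by
    rw [hq']
    field_simp
  have hA : (∑ i : Fin n, (∑ j : Fin m, (a i j) ^ p) ^ (q / p)) ^ (1 / q)
      ≤ RV p q 0 T (-M) M f := by
    rw [RV]
    exact le_iSup_of_le n (le_iSup_of_le m (le_iSup_of_le t (le_iSup_of_le x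
      (le_iSup_of_le ht (le_iSup_of_le hx le_rfl)))))
  have hB : (∑ i : Fin n, (∑ j : Fin m, (a i j) ^ p') ^ (q' / p'))
      ≤ S ^ ((p' - p) * (q / p)) * ∑ i : Fin n, (∑ j : Fin m, (a i j) ^ p) ^ (q / p) := by
    rw [Finset.mul_sum]
    refine Finset.sum_le_sum fun i _ => ?_
    calc (∑ j : Fin m, (a i j) ^ p') ^ (q' / p')
        ≤ (S ^ (p' - p) * ∑ j : Fin m, (a i j) ^ p) ^ (q' / p') :=
          ENNReal.rpow_le_rpow (h1 i) (by positivity)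
      _ = S ^ ((p' - p) * (q / p)) * (∑ j : Fin m, (a i j) ^ p) ^ (q / p) := by
          rw [hqp, ENNReal.mul_rpow_of_nonneg _ _ (by positivity), ← ENNReal.rpow_mul]
  calc (∑ i : Fin n, (∑ j : Fin m, (a i j) ^ p') ^ (q' / p')) ^ (1 / q')
      ≤ (S ^ ((p' - p) * (q / p)) * ∑ i : Fin n, (∑ j : Fin m, (a i j) ^ p) ^ (q / p)) ^ (1 / q') :=
        ENNReal.rpow_le_rpow hB (by positivity)
    _ = S ^ ((p' - p) / p') *
        ((∑ i : Fin n, (∑ j : Fin m, (a i j) ^ p) ^ (q / p)) ^ (1 / q)) ^ (q / q') := by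
        rw [ENNReal.mul_rpow_of_nonneg _ _ (by positivity), ← ENNReal.rpow_mul,
          ← ENNReal.rpow_mul]
        congr 2
        · rw [hq']; field_simp
        · rw [hq']; field_simp
    _ ≤ S ^ ((p' - p) / p') * (RV p q 0 T (-M) M f) ^ (q / q') :=
        mul_le_mul' le_rfl (ENNReal.rpow_le_rpow hA (by positivity))
end

section
/- Let $g : \mathbb{R} \to \mathbb{R}$ have finite $p$-variation on every compact interval, i.e. $\|g\|_{[-Q,Q];p} < \infty$ for all $Q$, and let $\rho$ be a nonnegative function supported in $[0,2]$ with $\int \rho = 1$. Define the mollification $g_n(x) := \int_0^2 \rho(y)\, g(x - y/n)\, dy$. Then for every $M > 0$ and every $n \ge 1$, the $p$-variation of $g_n$ on $[-M,M]$ satisfies $\|g_n\|_{[-M,M];p} \le \|g\|_{[-M-2, M];p}$. -/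
open Set Finset Filter MeasureTheory
open scoped ENNReal NNReal

/-- Jensen's inequality for `ℝ≥0∞`-valued functions on a probability space. -/
lemma jensen_rpow {μ : Measure ℝ} [IsProbabilityMeasure μ] {p : ℝ} (hp : 1 ≤ p)
    {f : ℝ → ℝ≥0∞} (hf : Measurable f) :
    (∫⁻ y, f y ∂μ) ^ p ≤ ∫⁻ y, f y ^ p ∂μ := by
  rcases eq_or_lt_of_le hp with h1 | h1
  · simp [← h1]
  · have hpq : Real.HolderConjugate p (Real.conjExponent p) :=
      Real.HolderConjugate.conjExponent h1
    have H := ENNReal.lintegral_mul_le_Lp_mul_Lq μ hpq hf.aemeasurable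
      (aemeasurable_const (b := (1 : ℝ≥0∞)))
    simp only [Pi.mul_apply, mul_one, ENNReal.one_rpow, lintegral_const, measure_univ,
      ENNReal.one_rpow, lintegral_one] at H
    calc (∫⁻ y, f y ∂μ) ^ p ≤ ((∫⁻ y, f y ^ p ∂μ) ^ (1 / p)) ^ p :=
          ENNReal.rpow_le_rpow (by simpa using H) (by linarith)
      _ = ∫⁻ y, f y ^ p ∂μ := by
          rw [← ENNReal.rpow_mul, one_div_mul_cancel (by linarith), ENNReal.rpow_one]

/-- A monotone family inside `[a,b]` has its `p`-variation sum bounded by `pVar p a b g`. -/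
lemma sum_le_pVar {m : ℕ} (p a b : ℝ) (g : ℝ → ℝ) (s : Fin (m + 1) → ℝ)
    (hs : Monotone s) (ha : a ≤ s 0) (hb : s (Fin.last m) ≤ b) :
    ∑ i : Fin m, (ENNReal.ofReal |g (s i.succ) - g (s i.castSucc)|) ^ p ≤ pVar p a b g := by
  set t : Fin (m + 2 + 1) → ℝ := fun k =>
    if hk : (k : ℕ) = 0 then a else if hk2 : (k : ℕ) = m + 2 then b
    else s ⟨(k : ℕ) - 1, by have := k.isLt; omega⟩ with ht
  have h0 : t 0 = a := by simp [ht]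
  have hlast : t (Fin.last (m + 2)) = b := by simp [ht, Fin.last]
  have htval : ∀ j : Fin (m + 1), t ⟨(j : ℕ) + 1, by omega⟩ = s j := by
    intro j
    have hj := j.isLt
    simp only [ht]
    rw [dif_neg (by simp), dif_neg (by simp; omega)]
    exact congrArg s (Fin.ext (by simp))
  have hpart : IsPartition a b t := by
    refine ⟨Fin.monotone_iff_le_succ.2 fun i => ?_, h0, hlast⟩
    rcases Nat.eq_zero_or_pos i.val with h | h
    · have hc : i.castSucc = 0 := by ext; simpa using h
      have hsucc : i.succ = (⟨((0 : Fin (m + 1)) : ℕ) + 1, by omega⟩ : Fin (m + 3)) := by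
        ext; simp [h]
      rw [hc, h0, hsucc, htval]
      exact ha
    · rcases eq_or_lt_of_le (Nat.succ_le_of_lt i.isLt) with h2 | h2
      · -- i.val = m + 1
        have hiv : i.val = m + 1 := by omega
        have hc : i.castSucc = (⟨((Fin.last m : Fin (m + 1)) : ℕ) + 1, by omega⟩ : Fin (m + 3)) := by
          ext; simp [hiv, Fin.last]
        have hsucc : i.succ = Fin.last (m + 2) := by ext; simp [hiv, Fin.last]
        rw [hc, htval, hsucc, hlast]
        exact hb
      · -- 1 ≤ i.val ≤ m
        have hiv : i.val ≤ m := by omega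
        have hc : i.castSucc
            = (⟨((⟨i.val - 1, by omega⟩ : Fin (m + 1)) : ℕ) + 1, by omega⟩ : Fin (m + 3)) := by
          ext; simp only [Fin.coe_castSucc, Fin.val_succ, Fin.val_mk]; omega
        have hsucc : i.succ
            = (⟨((⟨i.val, by omega⟩ : Fin (m + 1)) : ℕ) + 1, by omega⟩ : Fin (m + 3)) := by
          ext; simp only [Fin.coe_castSucc, Fin.val_succ, Fin.val_mk]
        rw [hc, htval, hsucc, htval]
        exact hs (by simp only [Fin.le_def, Fin.val_mk]; omega)
  set e : Fin m → Fin (m + 2) := fun i => i.succ.castSucc with he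
  have hinj : Function.Injective e :=
    fun i j hij => Fin.succ_injective _ (Fin.castSucc_injective _ hij)
  set G : Fin (m + 2) → ℝ≥0∞ :=
    fun j => (ENNReal.ofReal |g (t j.succ) - g (t j.castSucc)|) ^ p with hG
  have hterm : ∀ i : Fin m,
      (ENNReal.ofReal |g (s i.succ) - g (s i.castSucc)|) ^ p = G (e i) := by
    intro i
    have h1 : (e i).succ = (⟨((i.succ : Fin (m + 1)) : ℕ) + 1, by omega⟩ : Fin (m + 3)) := by
      ext; simp [he]
    have h2 : (e i).castSucc
        = (⟨((i.castSucc : Fin (m + 1)) : ℕ) + 1, by omega⟩ : Fin (m + 3)) := by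
      ext; simp [he]
    rw [hG]
    dsimp only
    rw [h1, h2, htval, htval]
  calc ∑ i : Fin m, (ENNReal.ofReal |g (s i.succ) - g (s i.castSucc)|) ^ p
      = ∑ i : Fin m, G (e i) := Finset.sum_congr rfl fun i _ => hterm i
    _ = ∑ j ∈ Finset.univ.image e, G j :=
        (Finset.sum_image fun a _ b _ h => hinj h).symm
    _ ≤ ∑ j : Fin (m + 2), G j := Finset.sum_le_sum_of_subset (Finset.subset_univ _)
    _ ≤ pVar p a b g := by
        refine le_iSup_of_le (m + 2) (le_iSup_of_le t ?_)
        exact le_iSup (fun _ : IsPartition a b t => ∑ j : Fin (m + 2), G j) hpart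

/-- Mollification does not increase the `p`-variation: if `gₙ x = ∫₀² ρ(y) g(x - y/n) dy`
with `ρ ≥ 0` supported in `[0,2]`, `∫ρ = 1`, then
`‖gₙ‖_{[-M,M];p} ≤ ‖g‖_{[-M-2,M];p}` for every `M > 0` and `n ≥ 1`. -/
theorem stmt5 (p : ℝ) (hp : 1 ≤ p) (g : ℝ → ℝ) (hg : Measurable g)
    (hgv : ∀ Q > (0:ℝ), pVar p (-Q) Q g ≠ ⊤)
    (ρ : ℝ → ℝ) (hρm : Measurable ρ) (hρ0 : ∀ x, 0 ≤ ρ x)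
    (hρs : Function.support ρ ⊆ Set.Icc 0 2) (hρi : ∫ x, ρ x = 1)
    (hint : ∀ (n : ℕ) (x : ℝ),
      MeasureTheory.IntegrableOn (fun y => ρ y * g (x - y / n)) (Set.Icc 0 2)) :
    ∀ M > (0:ℝ), ∀ n : ℕ, 1 ≤ n →
      (pVar p (-M) M (fun x => ∫ y in Set.Icc (0:ℝ) 2, ρ y * g (x - y / n))) ^ (1 / p) ≤
        (pVar p (-M - 2) M g) ^ (1 / p) := by
  intro M hM n hn
  have hn' : (1 : ℝ) ≤ (n : ℝ) := by exact_mod_cast hn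
  set ν : Measure ℝ := volume.restrict (Icc (0:ℝ) 2) with hν
  set μ : Measure ℝ := ν.withDensity (fun y => ((ρ y).toNNReal : ℝ≥0∞)) with hμ
  have hρnn : Measurable fun y => (ρ y).toNNReal := measurable_real_toNNReal.comp hρm
  have hρint : Integrable ρ := by
    by_contra h
    rw [integral_undef h] at hρi
    norm_num at hρi
  have hρIcc : ∫ y in Icc (0:ℝ) 2, ρ y = 1 := by
    rw [setIntegral_eq_integral_of_forall_compl_eq_zero
      (fun x hx => Function.notMem_support.1 fun hs => hx (hρs hs))]
    exact hρi
  have hprob : IsProbabilityMeasure μ := by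
    constructor
    rw [hμ, withDensity_apply _ MeasurableSet.univ, setLIntegral_univ]
    have : ∫⁻ y, ((ρ y).toNNReal : ℝ≥0∞) ∂ν = ENNReal.ofReal (∫ y, ρ y ∂ν) := by
      rw [ofReal_integral_eq_lintegral_ofReal (hρint.integrableOn) 
        (Eventually.of_forall hρ0)]
      rfl
    rw [this, hν]
    rw [hρIcc]
    norm_num
  have hmeas : ∀ c : ℝ, Measurable fun y : ℝ => g (c - y / (n : ℝ)) :=
    fun c => hg.comp ((measurable_id.div_const _).const_sub c)
  have hinteg : ∀ c : ℝ, Integrable (fun y => g (c - y / (n : ℝ))) μ := by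
    intro c
    rw [hμ, integrable_withDensity_iff_integrable_smul hρnn]
    refine (hint n c).congr (Eventually.of_forall fun y => ?_)
    simp [NNReal.smul_def, Real.coe_toNNReal _ (hρ0 y)]
  have hmoll : ∀ c : ℝ, (∫ y in Icc (0:ℝ) 2, ρ y * g (c - y / (n : ℝ)))
      = ∫ y, g (c - y / (n : ℝ)) ∂μ := by
    intro c
    rw [hμ, integral_withDensity_eq_integral_smul hρnn]
    refine integral_congr_ae (Eventually.of_forall fun y => ?_)
    simp [NNReal.smul_def, Real.coe_toNNReal _ (hρ0 y)]
  set gn : ℝ → ℝ := fun x => ∫ y in Icc (0:ℝ) 2, ρ y * g (x - y / (n : ℝ)) with hgn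
  have main : pVar p (-M) M gn ≤ pVar p (-M - 2) M g := by
    refine iSup_le fun m => iSup_le fun x => iSup_le fun hx => ?_
    obtain ⟨hmono, hx0, hxl⟩ := hx
    have step1 : ∀ i : Fin m,
        (ENNReal.ofReal |gn (x i.succ) - gn (x i.castSucc)|) ^ p ≤
        ∫⁻ y, (ENNReal.ofReal
          |g (x i.succ - y / (n : ℝ)) - g (x i.castSucc - y / (n : ℝ))|) ^ p ∂μ := by
      intro i
      set h : ℝ → ℝ := fun y => g (x i.succ - y / (n : ℝ)) - g (x i.castSucc - y / (n : ℝ))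
        with hh
      have hInt : Integrable h μ := (hinteg _).sub (hinteg _)
      have hdiff : gn (x i.succ) - gn (x i.castSucc) = ∫ y, h y ∂μ := by
        rw [hgn]
        dsimp only
        rw [hmoll, hmoll, ← integral_sub (hinteg _) (hinteg _)]
      rw [hdiff]
      have habs : ENNReal.ofReal |∫ y, h y ∂μ| ≤ ∫⁻ y, ENNReal.ofReal |h y| ∂μ := by
        rw [← ofReal_integral_eq_lintegral_ofReal hInt.abs
          (Eventually.of_forall fun y => abs_nonneg _)]
        exact ENNReal.ofReal_le_ofReal (by simpa using norm_integral_le_integral_norm h)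
      have hmf : Measurable fun y => ENNReal.ofReal |h y| :=
        ENNReal.measurable_ofReal.comp ((hmeas _).sub (hmeas _)).abs
      calc (ENNReal.ofReal |∫ y, h y ∂μ|) ^ p
          ≤ (∫⁻ y, ENNReal.ofReal |h y| ∂μ) ^ p :=
            ENNReal.rpow_le_rpow habs (by linarith)
        _ ≤ ∫⁻ y, (ENNReal.ofReal |h y|) ^ p ∂μ := jensen_rpow hp hmf
    have hmF : ∀ i : Fin m, Measurable fun y =>
        (ENNReal.ofReal
          |g (x i.succ - y / (n : ℝ)) - g (x i.castSucc - y / (n : ℝ))|) ^ p :=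
      fun i => ENNReal.continuous_rpow_const.measurable.comp
        (ENNReal.measurable_ofReal.comp ((hmeas _).sub (hmeas _)).abs)
    have hae : ∀ᵐ y ∂μ, y ∈ Icc (0:ℝ) 2 := by
      refine (withDensity_absolutelyContinuous ν _).ae_le ?_
      rw [hν]
      exact ae_restrict_mem measurableSet_Icc
    calc ∑ i : Fin m, (ENNReal.ofReal |gn (x i.succ) - gn (x i.castSucc)|) ^ p
        ≤ ∑ i : Fin m, ∫⁻ y, (ENNReal.ofReal
            |g (x i.succ - y / (n : ℝ)) - g (x i.castSucc - y / (n : ℝ))|) ^ p ∂μ :=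
          Finset.sum_le_sum fun i _ => step1 i
      _ = ∫⁻ y, ∑ i : Fin m, (ENNReal.ofReal
            |g (x i.succ - y / (n : ℝ)) - g (x i.castSucc - y / (n : ℝ))|) ^ p ∂μ :=
          (lintegral_finset_sum _ fun i _ => hmF i).symm
      _ ≤ ∫⁻ _, pVar p (-M - 2) M g ∂μ := by
          refine lintegral_mono_ae ?_
          filter_upwards [hae] with y hy
          have hdiv0 : 0 ≤ y / (n : ℝ) := div_nonneg hy.1 (by positivity)
          have hdiv2 : y / (n : ℝ) ≤ 2 := (div_le_self hy.1 hn').trans hy.2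
          refine sum_le_pVar p (-M - 2) M g (fun j => x j - y / (n : ℝ))
            (fun a b hab => by simpa using hmono hab) ?_ ?_
          · rw [hx0]; linarith
          · rw [hxl]; linarith
      _ = pVar p (-M - 2) M g := by
          rw [lintegral_const, measure_univ, mul_one]
  exact ENNReal.rpow_le_rpow main (one_div_nonneg.2 (by linarith))
end

section
/- Let $g_n, g : [0,T] \times [-M,M] \to \mathbb{R}$ with $\sup_{(t,x)} |g_n(t,x) - g(t,x)| \to 0$ as $n \to \infty$, and suppose all $g_n$ and $g$ satisfy a common bound $LV^{a,b}(g_n) \le K$ and $LV^{a,b}(g) \le K$ for some $a, b \ge 1$, $K < \infty$. Then for any $a' > a$ and $b' = (a'/a)b$, $LV^{a',b'}(g_n - g) \to 0$ as $n \to \infty$. -/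
open Set Finset Filter MeasureTheory
open scoped ENNReal NNReal

lemma my_add_rpow_le (x y : ℝ≥0∞) {c : ℝ} (hc : 0 ≤ c) :
    (x + y) ^ c ≤ 2 ^ c * (x ^ c + y ^ c) := by
  have hxy : x + y ≤ 2 * (x ⊔ y) := by
    rcases le_total x y with h | h
    · calc x + y ≤ y + y := by gcongr
        _ = 2 * y := (two_mul y).symm
        _ ≤ 2 * (x ⊔ y) := by gcongr; exact le_max_right _ _
    · calc x + y ≤ x + x := by gcongr
        _ = 2 * x := (two_mul x).symm
        _ ≤ 2 * (x ⊔ y) := by gcongr; exact le_max_left _ _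
  calc (x + y) ^ c ≤ (2 * (x ⊔ y)) ^ c := ENNReal.rpow_le_rpow hxy hc
    _ = 2 ^ c * (x ⊔ y) ^ c := ENNReal.mul_rpow_of_nonneg _ _ hc
    _ ≤ 2 ^ c * (x ^ c + y ^ c) := by
        gcongr
        rcases le_total x y with h | h
        · rw [sup_eq_right.mpr h]; exact le_add_self
        · rw [sup_eq_left.mpr h]; exact self_le_add_right _ _

lemma my_core {n m : ℕ} (u v w : Fin n → Fin m → ℝ≥0∞) (E : ℝ≥0∞)
    {a b a' : ℝ} (ha : 0 < a) (hb : 0 < b) (haa' : a ≤ a')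
    (hwE : ∀ i j, w i j ^ (a' - a) ≤ E)
    (hw : ∀ i j, w i j ≤ u i j + v i j) :
    ∑ j, (∑ i, w i j ^ a') ^ (b / a) ≤
      E ^ (b / a) * (2 ^ b * 2 ^ (b / a)) *
        ((∑ j, (∑ i, u i j ^ a) ^ (b / a)) + ∑ j, (∑ i, v i j ^ a) ^ (b / a)) := by
  have hc : (0:ℝ) ≤ b / a := by positivity
  have step1 : ∀ j, ∑ i, w i j ^ a' ≤ E * 2 ^ a *
      ((∑ i, u i j ^ a) + ∑ i, v i j ^ a) := by
    intro j
    have h1 : ∀ i, w i j ^ a' ≤ E * 2 ^ a * (u i j ^ a + v i j ^ a) := by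
      intro i
      have e1 : w i j ^ a' = w i j ^ (a' - a) * w i j ^ a := by
        rw [← ENNReal.rpow_add_of_nonneg _ _ (by linarith) ha.le, sub_add_cancel]
      rw [e1]
      calc w i j ^ (a' - a) * w i j ^ a ≤ E * (u i j + v i j) ^ a :=
            mul_le_mul' (hwE i j) (ENNReal.rpow_le_rpow (hw i j) ha.le)
        _ ≤ E * (2 ^ a * (u i j ^ a + v i j ^ a)) := by
            gcongr; exact my_add_rpow_le _ _ ha.le
        _ = E * 2 ^ a * (u i j ^ a + v i j ^ a) := by ring
    calc ∑ i, w i j ^ a' ≤ ∑ i, E * 2 ^ a * (u i j ^ a + v i j ^ a) :=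
          Finset.sum_le_sum fun i _ => h1 i
      _ = E * 2 ^ a * ((∑ i, u i j ^ a) + ∑ i, v i j ^ a) := by
          rw [← Finset.mul_sum, Finset.sum_add_distrib]
  have hab : a * (b / a) = b := by field_simp
  calc ∑ j, (∑ i, w i j ^ a') ^ (b / a)
      ≤ ∑ j, (E * 2 ^ a * ((∑ i, u i j ^ a) + ∑ i, v i j ^ a)) ^ (b / a) :=
        Finset.sum_le_sum fun j _ => ENNReal.rpow_le_rpow (step1 j) hc
    _ = ∑ j, E ^ (b / a) * 2 ^ b *
          (((∑ i, u i j ^ a) + ∑ i, v i j ^ a)) ^ (b / a) := by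
        refine Finset.sum_congr rfl fun j _ => ?_
        rw [ENNReal.mul_rpow_of_nonneg _ _ hc, ENNReal.mul_rpow_of_nonneg _ _ hc,
          ← ENNReal.rpow_mul, hab]
    _ ≤ ∑ j, E ^ (b / a) * 2 ^ b *
          (2 ^ (b / a) * ((∑ i, u i j ^ a) ^ (b / a) + (∑ i, v i j ^ a) ^ (b / a))) := by
        refine Finset.sum_le_sum fun j _ => ?_
        gcongr
        exact my_add_rpow_le _ _ hc
    _ = E ^ (b / a) * (2 ^ b * 2 ^ (b / a)) *
        ((∑ j, (∑ i, u i j ^ a) ^ (b / a)) + ∑ j, (∑ i, v i j ^ a) ^ (b / a)) := by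
        rw [← Finset.mul_sum, ← Finset.mul_sum, Finset.sum_add_distrib]
        ring

lemma my_partition_mem {n : ℕ} {c d : ℝ} {t : Fin (n + 1) → ℝ} (h : IsPartition c d t)
    (i : Fin (n + 1)) : t i ∈ Set.Icc c d :=
  ⟨h.2.1 ▸ h.1 (Fin.zero_le i), h.2.2 ▸ h.1 (Fin.le_last i)⟩

lemma my_sum_le_of_LV {a b t₀ t₁ x₀ x₁ K : ℝ} {f : ℝ → ℝ → ℝ}
    (hb : 0 < b) (hK : LV a b t₀ t₁ x₀ x₁ f ≤ ENNReal.ofReal K)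
    {n m : ℕ} {t : Fin (n + 1) → ℝ} {x : Fin (m + 1) → ℝ}
    (hpt : IsPartition t₀ t₁ t) (hpx : IsPartition x₀ x₁ x) :
    ∑ j : Fin m, (∑ i : Fin n,
      (ENNReal.ofReal
        |rectInc f (t i.succ) (t i.castSucc) (x j.succ) (x j.castSucc)|) ^ a) ^ (b / a)
      ≤ (ENNReal.ofReal K) ^ b := by
  set S := ∑ j : Fin m, (∑ i : Fin n,
      (ENNReal.ofReal
        |rectInc f (t i.succ) (t i.castSucc) (x j.succ) (x j.castSucc)|) ^ a) ^ (b / a)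
  have hterm : S ^ (1 / b) ≤ LV a b t₀ t₁ x₀ x₁ f := by
    refine le_iSup_of_le n (le_iSup_of_le m (le_iSup_of_le t (le_iSup_of_le x
      (le_iSup_of_le hpt (le_iSup_of_le hpx le_rfl)))))
  have h2 : S ^ (1 / b) ≤ ENNReal.ofReal K := hterm.trans hK
  have h3 : (S ^ (1 / b)) ^ b ≤ (ENNReal.ofReal K) ^ b := ENNReal.rpow_le_rpow h2 hb.le
  rwa [← ENNReal.rpow_mul, one_div, inv_mul_cancel₀ hb.ne', ENNReal.rpow_one] at h3

lemma my_key {T M a b a' K η : ℝ} (ha : 1 ≤ a) (hb : 1 ≤ b) (haa' : a < a') (hη : 0 ≤ η)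
    (f f₀ : ℝ → ℝ → ℝ)
    (hsup : ∀ t ∈ Set.Icc (0:ℝ) T, ∀ x ∈ Set.Icc (-M) M, |f t x - f₀ t x| ≤ η)
    (hfK : LV a b 0 T (-M) M f ≤ ENNReal.ofReal K)
    (hf₀K : LV a b 0 T (-M) M f₀ ≤ ENNReal.ofReal K) :
    LV a' ((a' / a) * b) 0 T (-M) M (fun t x => f t x - f₀ t x) ≤
      ENNReal.ofReal (4 * η) ^ ((a' - a) / a') *
        ((2:ℝ≥0∞) ^ b * 2 ^ (b / a) * (2 * (ENNReal.ofReal K) ^ b)) ^ (1 / ((a' / a) * b)) := by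
  have ha0 : (0:ℝ) < a := by linarith
  have hb0 : (0:ℝ) < b := by linarith
  have ha'0 : (0:ℝ) < a' := by linarith
  have hb'0 : (0:ℝ) < (a' / a) * b := by positivity
  have hdiv : ((a' / a) * b) / a' = b / a := by
    field_simp
  rw [LV]
  refine iSup_le fun n => iSup_le fun m => iSup_le fun t => iSup_le fun x =>
    iSup_le fun hpt => iSup_le fun hpx => ?_
  rw [hdiv]
  set u : Fin n → Fin m → ℝ≥0∞ := fun i j => ENNReal.ofReal
    |rectInc f (t i.succ) (t i.castSucc) (x j.succ) (x j.castSucc)| with hu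
  set v : Fin n → Fin m → ℝ≥0∞ := fun i j => ENNReal.ofReal
    |rectInc f₀ (t i.succ) (t i.castSucc) (x j.succ) (x j.castSucc)| with hv
  set w : Fin n → Fin m → ℝ≥0∞ := fun i j => ENNReal.ofReal
    |rectInc (fun t x => f t x - f₀ t x) (t i.succ) (t i.castSucc) (x j.succ) (x j.castSucc)|
    with hw
  have habs : ∀ (i : Fin n) (j : Fin m), |rectInc (fun t x => f t x - f₀ t x)
      (t i.succ) (t i.castSucc) (x j.succ) (x j.castSucc)| ≤ 4 * η ∧
      |rectInc (fun t x => f t x - f₀ t x)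
      (t i.succ) (t i.castSucc) (x j.succ) (x j.castSucc)| ≤
        |rectInc f (t i.succ) (t i.castSucc) (x j.succ) (x j.castSucc)| +
        |rectInc f₀ (t i.succ) (t i.castSucc) (x j.succ) (x j.castSucc)| := by
    intro i j
    have h1 := hsup _ (my_partition_mem hpt i.succ) _ (my_partition_mem hpx j.succ)
    have h2 := hsup _ (my_partition_mem hpt i.succ) _ (my_partition_mem hpx j.castSucc)
    have h3 := hsup _ (my_partition_mem hpt i.castSucc) _ (my_partition_mem hpx j.succ)
    have h4 := hsup _ (my_partition_mem hpt i.castSucc) _ (my_partition_mem hpx j.castSucc)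
    obtain ⟨l1, r1⟩ := abs_le.mp h1
    obtain ⟨l2, r2⟩ := abs_le.mp h2
    obtain ⟨l3, r3⟩ := abs_le.mp h3
    obtain ⟨l4, r4⟩ := abs_le.mp h4
    constructor
    · simp only [rectInc]
      rw [abs_le]; constructor <;> linarith
    · simp only [rectInc]
      have : (fun t x => f t x - f₀ t x) (t i.succ) (x j.succ) -
          (fun t x => f t x - f₀ t x) (t i.succ) (x j.castSucc) -
          ((fun t x => f t x - f₀ t x) (t i.castSucc) (x j.succ) -
          (fun t x => f t x - f₀ t x) (t i.castSucc) (x j.castSucc)) =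
          (f (t i.succ) (x j.succ) - f (t i.succ) (x j.castSucc) -
            (f (t i.castSucc) (x j.succ) - f (t i.castSucc) (x j.castSucc))) -
          (f₀ (t i.succ) (x j.succ) - f₀ (t i.succ) (x j.castSucc) -
            (f₀ (t i.castSucc) (x j.succ) - f₀ (t i.castSucc) (x j.castSucc))) := by ring
      rw [this]
      exact abs_sub _ _
  have hwE : ∀ i j, w i j ^ (a' - a) ≤ ENNReal.ofReal (4 * η) ^ (a' - a) := fun i j =>
    ENNReal.rpow_le_rpow (ENNReal.ofReal_le_ofReal (habs i j).1) (by linarith)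
  have hwuv : ∀ i j, w i j ≤ u i j + v i j := fun i j => by
    rw [hu, hv, hw, ← ENNReal.ofReal_add (abs_nonneg _) (abs_nonneg _)]
    exact ENNReal.ofReal_le_ofReal (habs i j).2
  have hcore := my_core u v w (ENNReal.ofReal (4 * η) ^ (a' - a)) ha0 hb0 haa'.le hwE hwuv
  have hU := my_sum_le_of_LV hb0 hfK hpt hpx
  have hV := my_sum_le_of_LV hb0 hf₀K hpt hpx
  have hsum : ∑ j, (∑ i, w i j ^ a') ^ (b / a) ≤
      (ENNReal.ofReal (4 * η) ^ (a' - a)) ^ (b / a) *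
        ((2:ℝ≥0∞) ^ b * 2 ^ (b / a) * (2 * (ENNReal.ofReal K) ^ b)) := by
    refine hcore.trans ?_
    rw [show ∀ A B : ℝ≥0∞, (ENNReal.ofReal (4*η) ^ (a'-a)) ^ (b/a) * (2^b * 2^(b/a)) * (A + B) =
      (ENNReal.ofReal (4*η) ^ (a'-a)) ^ (b/a) * (2^b * 2^(b/a) * (A + B)) from fun A B => by ring]
    gcongr
    calc (∑ j, (∑ i, u i j ^ a) ^ (b/a)) + ∑ j, (∑ i, v i j ^ a) ^ (b/a) ≤
        (ENNReal.ofReal K) ^ b + (ENNReal.ofReal K) ^ b := add_le_add hU hV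
      _ = 2 * (ENNReal.ofReal K) ^ b := (two_mul _).symm
  have hfinal := ENNReal.rpow_le_rpow hsum (by positivity : (0:ℝ) ≤ 1 / ((a' / a) * b))
  rw [ENNReal.mul_rpow_of_nonneg _ _ (by positivity : (0:ℝ) ≤ 1 / ((a' / a) * b)),
    ← ENNReal.rpow_mul, ← ENNReal.rpow_mul] at hfinal
  rw [show (a' - a) * (b / a * (1 / ((a' / a) * b))) = (a' - a) / a' by field_simp]
    at hfinal
  simpa only [hw] using hfinal

/-- Uniform convergence plus a common `LV^{a,b}` bound imply convergence in the interpolated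
joint left variation: `LV^{a',b'}(gₙ - g) → 0` for `a' > a`, `b' = (a'/a)·b`. -/
theorem stmt11 (T M a b K : ℝ) (hT : 0 < T) (hM : 0 < M) (ha : 1 ≤ a) (hb : 1 ≤ b)
    (g : ℕ → ℝ → ℝ → ℝ) (g₀ : ℝ → ℝ → ℝ)
    (hunif : ∀ ε > (0:ℝ), ∃ N : ℕ, ∀ n ≥ N, ∀ t ∈ Set.Icc (0:ℝ) T, ∀ x ∈ Set.Icc (-M) M,
      |g n t x - g₀ t x| ≤ ε)
    (hgK : ∀ n, LV a b 0 T (-M) M (g n) ≤ ENNReal.ofReal K)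
    (hg₀K : LV a b 0 T (-M) M g₀ ≤ ENNReal.ofReal K) :
    ∀ a' b' : ℝ, a < a' → b' = (a' / a) * b →
      Filter.Tendsto (fun n => LV a' b' 0 T (-M) M fun t x => g n t x - g₀ t x)
        Filter.atTop (nhds 0) := by
  intro a' b' haa' hb'
  subst hb'
  have ha0 : (0:ℝ) < a := by linarith
  have hb0 : (0:ℝ) < b := by linarith
  have ha'0 : (0:ℝ) < a' := by linarith
  set θ := (a' - a) / a' with hθdef
  have hθ : 0 < θ := div_pos (by linarith) ha'0
  set C := ((2:ℝ≥0∞) ^ b * 2 ^ (b / a) * (2 * (ENNReal.ofReal K) ^ b)) ^ (1 / ((a' / a) * b))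
    with hCdef
  have hC : C ≠ ⊤ := by
    refine ENNReal.rpow_ne_top_of_nonneg (by positivity) ?_
    refine ENNReal.mul_ne_top (ENNReal.mul_ne_top ?_ ?_) (ENNReal.mul_ne_top ?_ ?_)
    · exact ENNReal.rpow_ne_top_of_nonneg hb0.le (by simp)
    · exact ENNReal.rpow_ne_top_of_nonneg (by positivity) (by simp)
    · simp
    · exact ENNReal.rpow_ne_top_of_nonneg hb0.le ENNReal.ofReal_ne_top
  rw [ENNReal.tendsto_nhds_zero]
  intro δ hδ
  obtain ⟨η, hη, hbound⟩ : ∃ η : ℝ, 0 < η ∧ ENNReal.ofReal (4 * η) ^ θ * C ≤ δ := by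
    rcases eq_or_ne C 0 with h0 | h0
    · exact ⟨1, one_pos, by simp [h0]⟩
    rcases eq_or_ne δ ⊤ with htop | htop
    · exact ⟨1, one_pos, htop ▸ le_top⟩
    have hd : 0 < δ.toReal := ENNReal.toReal_pos hδ.ne' htop
    have hCr : 0 < C.toReal := ENNReal.toReal_pos h0 hC
    refine ⟨(δ.toReal / C.toReal) ^ (1 / θ) / 4, by positivity, ?_⟩
    have h4 : 4 * ((δ.toReal / C.toReal) ^ (1 / θ) / 4)
        = (δ.toReal / C.toReal) ^ (1 / θ) := by ring
    rw [h4, ENNReal.ofReal_rpow_of_nonneg (by positivity) hθ.le,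
      ← Real.rpow_mul (by positivity), one_div, inv_mul_cancel₀ hθ.ne', Real.rpow_one]
    calc ENNReal.ofReal (δ.toReal / C.toReal) * C
        = ENNReal.ofReal (δ.toReal / C.toReal) * ENNReal.ofReal C.toReal := by
          rw [ENNReal.ofReal_toReal hC]
      _ = ENNReal.ofReal (δ.toReal / C.toReal * C.toReal) := by
          rw [ENNReal.ofReal_mul (by positivity)]
      _ = δ := by rw [div_mul_cancel₀ _ hCr.ne', ENNReal.ofReal_toReal htop]
      _ ≤ δ := le_rfl
  obtain ⟨N, hN⟩ := hunif η hη
  filter_upwards [Filter.eventually_ge_atTop N] with k hk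
  exact (my_key ha hb haa' hη.le (g k) g₀ (fun t ht x hx => hN k hk t ht x hx)
    (hgK k) hg₀K).trans hbound
end

section
/- Let $g : [A,B] \to \mathbb{R}$ be continuous and $f_n \to f$ pointwise with uniform convergence $\sup_{x} |f_n(x) - f(x)| \to 0$, where all $f_n$ satisfy a uniform $p$-variation bound $\|f_n\|_{[A,B];p} \le K$ and $g$ has finite $q$-variation with $1/p + 1/q > 1$. Then the Young integrals converge: $\int_A^B g(x) \, d f_n(x) \to \int_A^B g(x) \, d f(x)$ as $n \to \infty$. -/
open Set Finset Filter MeasureTheory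
open scoped ENNReal NNReal

/-- `I` is the Young integral `∫_A^B g df`, defined as the limit of left-point
Riemann–Stieltjes sums along partitions of vanishing mesh. -/
def IsYoungIntegral (g f : ℝ → ℝ) (A B I : ℝ) : Prop :=
  ∀ ε > (0:ℝ), ∃ δ > (0:ℝ), ∀ (n : ℕ) (x : Fin (n + 1) → ℝ), IsPartition A B x →
    (∀ i : Fin n, x i.succ - x i.castSucc < δ) →
    |(∑ i : Fin n, g (x i.castSucc) * (f (x i.succ) - f (x i.castSucc))) - I| < ε

namespace YoungAux

noncomputable def RS (g h : ℝ → ℝ) (x : ℕ → ℝ) (m : ℕ) : ℝ :=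
  ∑ i ∈ Finset.range m, g (x i) * (h (x (i+1)) - h (x i))

lemma sum_split2 (t : ℕ → ℝ) (m j' : ℕ) (hj : j' + 1 ≤ m) :
    ∑ i ∈ range (m+1), t i
      = (∑ i ∈ range j', t i) + t j' + t (j'+1) + ∑ k ∈ range (m - (j'+1)), t (j'+1+1+k) := by
  rw [show m + 1 = (j'+1+1) + (m - (j'+1)) by omega, Finset.sum_range_add,
    Finset.sum_range_succ, Finset.sum_range_succ]

lemma sum_split1 (t : ℕ → ℝ) (m j' : ℕ) (hj : j' + 1 ≤ m) :
    ∑ i ∈ range m, t i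
      = (∑ i ∈ range j', t i) + t j' + ∑ k ∈ range (m - (j'+1)), t (j'+1+k) := by
  rw [show m = (j'+1) + (m - (j'+1)) by omega, Finset.sum_range_add, Finset.sum_range_succ,
    show j' + 1 + (m - (j' + 1)) - (j' + 1) = m - (j'+1) by omega]

lemma RS_remove (g h : ℝ → ℝ) (x : ℕ → ℝ) (m j' : ℕ) (hj : j' + 1 ≤ m) :
    RS g h x (m+1) =
      RS g h (fun i => if i < j' + 1 then x i else x (i+1)) m
        + (g (x (j'+1)) - g (x j')) * (h (x (j'+2)) - h (x (j'+1))) := by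
  have key1 := sum_split1 (fun i => g ((fun i => if i < j' + 1 then x i else x (i+1)) i) *
    (h ((fun i => if i < j' + 1 then x i else x (i+1)) (i+1))
      - h ((fun i => if i < j' + 1 then x i else x (i+1)) i))) m j' hj
  have key2 := sum_split2 (fun i => g (x i) * (h (x (i+1)) - h (x i))) m j' hj
  rw [RS, RS, key1, key2]
  have e1 : ∀ i ∈ range j',
      (g (if i < j' + 1 then x i else x (i+1)) *
        (h (if i + 1 < j' + 1 then x (i+1) else x (i+1+1))
          - h (if i < j' + 1 then x i else x (i+1))))
      = g (x i) * (h (x (i+1)) - h (x i)) := by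
    intro i hi
    have hi' := Finset.mem_range.mp hi
    rw [if_pos (by omega), if_pos (by omega)]
  have e2 : (g (if j' < j' + 1 then x j' else x (j'+1)) *
        (h (if j' + 1 < j' + 1 then x (j'+1) else x (j'+1+1))
          - h (if j' < j' + 1 then x j' else x (j'+1))))
      = g (x j') * (h (x (j'+2)) - h (x j')) := by
    rw [if_pos (by omega), if_neg (by omega)]
  have e3 : ∀ k, (g (if j'+1+k < j' + 1 then x (j'+1+k) else x (j'+1+k+1)) *
        (h (if j'+1+k+1 < j' + 1 then x (j'+1+k+1) else x (j'+1+k+1+1))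
          - h (if j'+1+k < j' + 1 then x (j'+1+k) else x (j'+1+k+1))))
      = g (x (j'+1+1+k)) * (h (x (j'+1+1+k+1)) - h (x (j'+1+1+k))) := by
    intro k
    rw [if_neg (by omega), if_neg (by omega)]
    have h1 : j' + 1 + k + 1 = j' + 1 + 1 + k := by omega
    rw [h1]
  simp only []
  rw [Finset.sum_congr rfl e1, e2, Finset.sum_congr rfl (fun k _ => e3 k)]
  ring

lemma pigeon (N : ℕ) (hN : 0 < N) (a b : ℕ → ℝ) (ha : ∀ i, 0 ≤ a i) (hb : ∀ i, 0 ≤ b i)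
    (G H : ℝ) (hG : ∑ i ∈ range N, a i ≤ G) (hH : ∑ i ∈ range N, b i ≤ H) :
    ∃ j < N, a j ≤ 2*G/N ∧ b j ≤ 2*H/N := by
  have hNe : (range N).Nonempty := ⟨0, Finset.mem_range.mpr hN⟩
  have hNR : (0:ℝ) < N := by exact_mod_cast hN
  have hG0 : 0 ≤ G := le_trans (Finset.sum_nonneg fun i _ => ha i) hG
  have hH0 : 0 ≤ H := le_trans (Finset.sum_nonneg fun i _ => hb i) hH
  have const_sum : ∀ c : ℝ, ∑ _i ∈ range N, c/N = c := by
    intro c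
    rw [Finset.sum_const, Finset.card_range, nsmul_eq_mul]
    field_simp
  rcases eq_or_lt_of_le hG0 with hGz | hGpos
  · have hsum0 : ∑ i ∈ range N, a i = 0 :=
      le_antisymm (hG.trans hGz.symm.le) (Finset.sum_nonneg fun i _ => ha i)
    have haz : ∀ i ∈ range N, a i = 0 :=
      (Finset.sum_eq_zero_iff_of_nonneg (fun i _ => ha i)).mp hsum0
    obtain ⟨j, hj, hbj⟩ := Finset.exists_le_of_sum_le (f := b) (g := fun _ => 2*H/N) hNe
      (by rw [const_sum]; linarith)
    exact ⟨j, Finset.mem_range.mp hj, by rw [haz j hj, ← hGz]; positivity, hbj⟩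
  rcases eq_or_lt_of_le hH0 with hHz | hHpos
  · have hsum0 : ∑ i ∈ range N, b i = 0 :=
      le_antisymm (hH.trans hHz.symm.le) (Finset.sum_nonneg fun i _ => hb i)
    have hbz : ∀ i ∈ range N, b i = 0 :=
      (Finset.sum_eq_zero_iff_of_nonneg (fun i _ => hb i)).mp hsum0
    obtain ⟨j, hj, haj⟩ := Finset.exists_le_of_sum_le (f := a) (g := fun _ => 2*G/N) hNe
      (by rw [const_sum]; linarith)
    exact ⟨j, Finset.mem_range.mp hj, haj, by rw [hbz j hj, ← hHz]; positivity⟩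
  · obtain ⟨j, hj, hcj⟩ := Finset.exists_le_of_sum_le
      (f := fun i => a i / G + b i / H) (g := fun _ => 2/N) hNe
      (by
        rw [const_sum, Finset.sum_add_distrib, ← Finset.sum_div, ← Finset.sum_div]
        have h1 : (∑ i ∈ range N, a i) / G ≤ 1 := by
          rw [div_le_one hGpos]; exact hG
        have h2 : (∑ i ∈ range N, b i) / H ≤ 1 := by
          rw [div_le_one hHpos]; exact hH
        linarith)
    have hbn : 0 ≤ b j / H := div_nonneg (hb j) hHpos.le
    have han : 0 ≤ a j / G := div_nonneg (ha j) hGpos.le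
    have h1 : a j / G ≤ 2/N := by linarith
    have h2 : b j / H ≤ 2/N := by linarith
    refine ⟨j, Finset.mem_range.mp hj, ?_, ?_⟩
    · have := (div_le_iff₀ hGpos).mp h1
      linarith [this, (by ring : 2/(N:ℝ)*G = 2*G/N)]
    · have := (div_le_iff₀ hHpos).mp h2
      linarith [this, (by ring : 2/(N:ℝ)*H = 2*H/N)]

lemma young_max (A B : ℝ) (g h : ℝ → ℝ) (q p' Gq Hp : ℝ)
    (hq0 : 0 < q) (hp0 : 0 < p') (hGq : 0 ≤ Gq) (hHp : 0 ≤ Hp)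
    (Hg : ∀ (x : ℕ → ℝ) (N : ℕ), (∀ i, i < N → x i ≤ x (i+1)) →
      (∀ i, i ≤ N → x i ∈ Set.Icc A B) →
      ∑ i ∈ range N, |g (x (i+1)) - g (x i)| ^ q ≤ Gq)
    (Hh : ∀ (x : ℕ → ℝ) (N : ℕ), (∀ i, i < N → x i ≤ x (i+1)) →
      (∀ i, i ≤ N → x i ∈ Set.Icc A B) →
      ∑ i ∈ range N, |h (x (i+1)) - h (x i)| ^ p' ≤ Hp) :
    ∀ (m : ℕ) (x : ℕ → ℝ), (∀ i, i < m → x i ≤ x (i+1)) → (∀ i, i ≤ m → x i ∈ Set.Icc A B) →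
      |RS g h x m - g (x 0) * (h (x m) - h (x 0))|
        ≤ Gq^(1/q) * Hp^(1/p') * ∑ k ∈ range m, (4/(k+1:ℝ))^(1/q + 1/p') := by
  intro m
  induction m with
  | zero =>
      intro x _ _
      have : RS g h x 0 = 0 := by simp [RS]
      simp [this]
  | succ m ih =>
      intro x hchain hicc
      rcases Nat.eq_zero_or_pos m with hm0 | hmpos
      · subst hm0
        have : RS g h x 1 = g (x 0) * (h (x 1) - h (x 0)) := by simp [RS]
        rw [this]
        simp only [sub_self, abs_zero]
        have : (0:ℝ) ≤ ∑ k ∈ range 1, (4/(k+1:ℝ))^(1/q + 1/p') := by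
          apply Finset.sum_nonneg; intro k _; positivity
        positivity
      · set θ : ℝ := 1/q + 1/p' with hθ
        have hθ0 : 0 ≤ θ := by positivity
        obtain ⟨j, hjm, haj, hbj⟩ := pigeon m hmpos
          (fun j => |g (x (j+1)) - g (x j)| ^ q)
          (fun j => |h (x (j+2)) - h (x (j+1))| ^ p')
          (fun j => by positivity) (fun j => by positivity) Gq Hp
          (Hg x m (fun i hi => hchain i (by omega)) (fun i hi => hicc i (by omega)))
          (by
            have := Hh (fun i => x (i+1)) m
              (fun i hi => hchain (i+1) (by omega)) (fun i hi => hicc (i+1) (by omega))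
            simpa using this)
        have hj1 : j + 1 ≤ m := hjm
        set x' : ℕ → ℝ := fun i => if i < j + 1 then x i else x (i+1) with hx'
        have hchain' : ∀ i, i < m → x' i ≤ x' (i+1) := by
          intro i hi
          simp only [hx']
          by_cases h1 : i + 1 < j + 1
          · rw [if_pos (by omega), if_pos h1]; exact hchain i (by omega)
          · by_cases h2 : i < j + 1
            · rw [if_pos h2, if_neg h1]
              exact le_trans (hchain i (by omega)) (by
                have : i + 1 = j + 1 := by omega
                rw [this]
                exact hchain (j+1) (by omega))
            · rw [if_neg h2, if_neg h1]; exact hchain (i+1) (by omega)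
        have hicc' : ∀ i, i ≤ m → x' i ∈ Set.Icc A B := by
          intro i hi
          simp only [hx']
          by_cases h1 : i < j + 1
          · rw [if_pos h1]; exact hicc i (by omega)
          · rw [if_neg h1]; exact hicc (i+1) (by omega)
        have hx'0 : x' 0 = x 0 := by simp only [hx']; rw [if_pos (by omega)]
        have hx'm : x' m = x (m+1) := by simp only [hx']; rw [if_neg (by omega)]
        have hrem := RS_remove g h x m j hj1
        have hIH := ih x' hchain' hicc'
        rw [hx'0, hx'm] at hIH
        have hmR : (0:ℝ) < m := by exact_mod_cast hmpos
        have habs_g : |g (x (j+1)) - g (x j)| ≤ (2*Gq/m) ^ (1/q) := by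
          have h1 : |g (x (j+1)) - g (x j)| = (|g (x (j+1)) - g (x j)| ^ q) ^ (1/q) := by
            rw [one_div, Real.rpow_rpow_inv (abs_nonneg _) (ne_of_gt hq0)]
          rw [h1]
          exact Real.rpow_le_rpow (by positivity) haj (by positivity)
        have habs_h : |h (x (j+2)) - h (x (j+1))| ≤ (2*Hp/m) ^ (1/p') := by
          have h1 : |h (x (j+2)) - h (x (j+1))| = (|h (x (j+2)) - h (x (j+1))| ^ p') ^ (1/p') := by
            rw [one_div, Real.rpow_rpow_inv (abs_nonneg _) (ne_of_gt hp0)]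
          rw [h1]
          exact Real.rpow_le_rpow (by positivity) hbj (by positivity)
        have hE : |(g (x (j+1)) - g (x j)) * (h (x (j+2)) - h (x (j+1)))|
            ≤ Gq^(1/q) * Hp^(1/p') * (4/(m+1:ℝ))^θ := by
          rw [abs_mul]
          have step1 : |g (x (j+1)) - g (x j)| * |h (x (j+2)) - h (x (j+1))|
              ≤ (2*Gq/m) ^ (1/q) * (2*Hp/m) ^ (1/p') :=
            mul_le_mul habs_g habs_h (abs_nonneg _) (by positivity)
          refine le_trans step1 ?_
          have e1 : (2*Gq/(m:ℝ)) ^ (1/q) = Gq^(1/q) * (2/m)^(1/q) := by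
            rw [show 2*Gq/(m:ℝ) = Gq * (2/m) by ring, Real.mul_rpow hGq (by positivity)]
          have e2 : (2*Hp/(m:ℝ)) ^ (1/p') = Hp^(1/p') * (2/m)^(1/p') := by
            rw [show 2*Hp/(m:ℝ) = Hp * (2/m) by ring, Real.mul_rpow hHp (by positivity)]
          rw [e1, e2]
          have e3 : (2/(m:ℝ))^(1/q) * (2/(m:ℝ))^(1/p') = (2/(m:ℝ))^θ := by
            rw [hθ, Real.rpow_add (by positivity)]
          have e4 : (2/(m:ℝ))^θ ≤ (4/(m+1:ℝ))^θ := by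
            apply Real.rpow_le_rpow (by positivity) ?_ hθ0
            rw [div_le_div_iff₀ hmR (by positivity)]
            have hm1 : (1:ℝ) ≤ m := by exact_mod_cast hmpos
            nlinarith [hm1]
          calc Gq^(1/q) * (2/(m:ℝ))^(1/q) * (Hp^(1/p') * (2/(m:ℝ))^(1/p'))
              = Gq^(1/q) * Hp^(1/p') * ((2/(m:ℝ))^(1/q) * (2/(m:ℝ))^(1/p')) := by ring
            _ = Gq^(1/q) * Hp^(1/p') * (2/(m:ℝ))^θ := by rw [e3]
            _ ≤ Gq^(1/q) * Hp^(1/p') * (4/(m+1:ℝ))^θ := by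
                apply mul_le_mul_of_nonneg_left e4 (by positivity)
        calc |RS g h x (m+1) - g (x 0) * (h (x (m+1)) - h (x 0))|
            = |(RS g h x' m - g (x 0) * (h (x (m+1)) - h (x 0)))
                + (g (x (j+1)) - g (x j)) * (h (x (j+2)) - h (x (j+1)))| := by
              rw [hrem, ← hx']
              congr 1
              ring
          _ ≤ |RS g h x' m - g (x 0) * (h (x (m+1)) - h (x 0))|
                + |(g (x (j+1)) - g (x j)) * (h (x (j+2)) - h (x (j+1)))| := abs_add_le _ _
          _ ≤ Gq^(1/q) * Hp^(1/p') * (∑ k ∈ range m, (4/(k+1:ℝ))^θ)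
                + Gq^(1/q) * Hp^(1/p') * (4/(m+1:ℝ))^θ := add_le_add hIH hE
          _ = Gq^(1/q) * Hp^(1/p') * ∑ k ∈ range (m+1), (4/(k+1:ℝ))^θ := by
              rw [Finset.sum_range_succ]
              ring

lemma pVar_chain_bound (r A B : ℝ) (hr0 : 0 < r) (φ : ℝ → ℝ)
    (x : ℕ → ℝ) (N : ℕ) (hchain : ∀ i, i < N → x i ≤ x (i+1))
    (hicc : ∀ i, i ≤ N → x i ∈ Set.Icc A B) :
    ENNReal.ofReal (∑ i ∈ range N, |φ (x (i+1)) - φ (x i)| ^ r) ≤ pVar r A B φ := by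
  classical
  set z : ℕ → ℝ := fun k => if k = 0 then A else if k ≤ N + 1 then x (k-1) else B with hz
  have hz0 : z 0 = A := by simp [hz]
  have hzlast : z (N+2) = B := by simp [hz]
  have hzmid : ∀ k, k ≤ N → z (k+1) = x k := by
    intro k hk
    simp only [hz]
    rw [if_neg (by omega), if_pos (by omega), show k+1-1 = k from rfl]
  have hmono : ∀ k, k ≤ N + 1 → z k ≤ z (k+1) := by
    intro k hk
    rcases Nat.eq_zero_or_pos k with h0 | hpos
    · subst h0
      rw [hz0, hzmid 0 (by omega)]
      exact (hicc 0 (by omega)).1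
    · rcases Nat.lt_or_ge k (N+1) with hlt | hge
      · have hk' : k = (k-1)+1 := by omega
        rw [hk', hzmid (k-1) (by omega), hzmid ((k-1)+1) (by omega)]
        exact hchain (k-1) (by omega)
      · have hk1 : k = N + 1 := by omega
        subst hk1
        rw [hzmid N (by omega)]
        have : z (N+2) = B := hzlast
        rw [this]
        exact (hicc N (by omega)).2
  set zF : Fin (N+2+1) → ℝ := fun i => z i.val with hzF
  have hpart : IsPartition A B zF := by
    refine ⟨?_, ?_, ?_⟩
    · rw [Fin.monotone_iff_le_succ]
      intro i
      have h1 : (i.castSucc : Fin (N+3)).val = i.val := rfl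
      have h2 : (i.succ : Fin (N+3)).val = i.val + 1 := rfl
      simp only [hzF, h1, h2]
      exact hmono i.val (by omega)
    · simp only [hzF]; exact hz0
    · simp only [hzF]; exact hzlast
  have key : ENNReal.ofReal (∑ i ∈ range N, |φ (x (i+1)) - φ (x i)| ^ r)
      ≤ ∑ i : Fin (N+2), (ENNReal.ofReal |φ (zF i.succ) - φ (zF i.castSucc)|) ^ r := by
    have e0 : ∑ i : Fin (N+2), (ENNReal.ofReal |φ (zF i.succ) - φ (zF i.castSucc)|) ^ r
        = ∑ k ∈ range (N+2), (ENNReal.ofReal |φ (z (k+1)) - φ (z k)|) ^ r := by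
      rw [← Fin.sum_univ_eq_sum_range (fun k => (ENNReal.ofReal |φ (z (k+1)) - φ (z k)|) ^ r) (N+2)]
      apply Finset.sum_congr rfl
      intro i _
      rfl
    rw [e0]
    have e1 : ENNReal.ofReal (∑ i ∈ range N, |φ (x (i+1)) - φ (x i)| ^ r)
        = ∑ i ∈ range N, (ENNReal.ofReal |φ (x (i+1)) - φ (x i)|) ^ r := by
      rw [ENNReal.ofReal_sum_of_nonneg (fun i _ => by positivity)]
      apply Finset.sum_congr rfl
      intro i _
      rw [ENNReal.ofReal_rpow_of_nonneg (abs_nonneg _) hr0.le]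
    rw [e1]
    have e2 : ∀ i ∈ range N, (ENNReal.ofReal |φ (x (i+1)) - φ (x i)|) ^ r
        = (ENNReal.ofReal |φ (z (i+1+1)) - φ (z (i+1))|) ^ r := by
      intro i hi
      have hi' := Finset.mem_range.mp hi
      rw [hzmid (i+1) (by omega), hzmid i (by omega)]
    rw [Finset.sum_congr rfl e2]
    have : ∑ i ∈ range N, (ENNReal.ofReal |φ (z (i+1+1)) - φ (z (i+1))|) ^ r
        = ∑ k ∈ Finset.Ico 1 (N+1), (ENNReal.ofReal |φ (z (k+1)) - φ (z k)|) ^ r := by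
      rw [Finset.sum_Ico_eq_sum_range]
      simp only [Nat.add_sub_cancel]
      apply Finset.sum_congr rfl
      intro i _
      rw [show 1+i = i+1 by omega]
    rw [this]
    apply Finset.sum_le_sum_of_subset
    intro k hk
    simp only [Finset.mem_Ico] at hk
    exact Finset.mem_range.mpr (by omega)
  refine le_trans key ?_
  rw [pVar]
  exact le_iSup_of_le (N+2) (le_iSup_of_le zF (le_iSup_of_le hpart le_rfl))

lemma rpow_interp (a t p p' : ℝ) (ha : 0 ≤ a) (hat : a ≤ t) (hp : 0 < p) (hpp' : p < p') :
    a ^ p' ≤ t ^ (p' - p) * a ^ p := by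
  rcases eq_or_lt_of_le ha with h0 | hpos
  · rw [← h0, Real.zero_rpow (by linarith : (0:ℝ) < p').ne', Real.zero_rpow hp.ne']
    simp
  · have e : a ^ p' = a ^ (p' - p) * a ^ p := by
      rw [← Real.rpow_add hpos]
      ring_nf
    rw [e]
    have ht0 : 0 < t := lt_of_lt_of_le hpos hat
    exact mul_le_mul_of_nonneg_right
      (Real.rpow_le_rpow hpos.le hat (by linarith)) (by positivity)

lemma rpow_add_le (u v p : ℝ) (hu : 0 ≤ u) (hv : 0 ≤ v) (hp : 0 ≤ p) :
    (u + v) ^ p ≤ 2 ^ p * (u ^ p + v ^ p) := by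
  have h1 : u + v ≤ 2 * max u v := by
    rcases le_total u v with h | h
    · rw [max_eq_right h]; linarith
    · rw [max_eq_left h]; linarith
  have hmax0 : 0 ≤ max u v := le_trans hu (le_max_left _ _)
  calc (u+v)^p ≤ (2 * max u v)^p := Real.rpow_le_rpow (by positivity) h1 hp
    _ = 2^p * (max u v)^p := Real.mul_rpow (by norm_num) hmax0
    _ ≤ 2^p * (u^p + v^p) := by
        apply mul_le_mul_of_nonneg_left _ (by positivity)
        rcases le_total u v with h | h
        · rw [max_eq_right h]
          have := Real.rpow_nonneg hu p
          linarith
        · rw [max_eq_left h]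
          have := Real.rpow_nonneg hv p
          linarith

end YoungAux

set_option maxHeartbeats 2000000

open YoungAux

/-- Convergence of Young integrals: if `g` is continuous with finite `q`-variation, the `fₙ`
have a uniform `p`-variation bound and converge uniformly to `f`, and `1/p + 1/q > 1`, then
`∫_A^B g dfₙ → ∫_A^B g df`. -/
theorem stmt14 (A B p q K : ℝ) (hAB : A < B) (hp : 1 ≤ p) (hq : 1 ≤ q)
    (hpq : 1 / p + 1 / q > 1)
    (g : ℝ → ℝ) (hg : ContinuousOn g (Set.Icc A B)) (hgq : pVar q A B g ≠ ⊤)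
    (f : ℕ → ℝ → ℝ) (f₀ : ℝ → ℝ)
    (hK : ∀ n, (pVar p A B (f n)) ^ (1 / p) ≤ ENNReal.ofReal K)
    (hunif : ∀ ε > (0:ℝ), ∃ N : ℕ, ∀ n ≥ N, ∀ x ∈ Set.Icc A B, |f n x - f₀ x| ≤ ε)
    (I : ℕ → ℝ) (I₀ : ℝ)
    (hI : ∀ n, IsYoungIntegral g (f n) A B (I n)) (hI₀ : IsYoungIntegral g f₀ A B I₀) :
    Filter.Tendsto I Filter.atTop (nhds I₀) := by
  have hp0 : 0 < p := lt_of_lt_of_le one_pos hp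
  have hq0 : 0 < q := lt_of_lt_of_le one_pos hq
  -- choose p' with p < p' and 1/q + 1/p' > 1
  set α : ℝ := (1/p + (1 - 1/q))/2 with hα
  have hq1 : 1/q ≤ 1 := by rw [div_le_one hq0]; exact hq
  have hp1pos : 0 < 1/p := by positivity
  have hα0 : 0 < α := by rw [hα]; linarith
  have hαp : α < 1/p := by rw [hα]; linarith [hpq]
  set p' : ℝ := 1/α with hp'def
  have hp'0 : 0 < p' := by rw [hp'def]; positivity
  have hinv : 1/p' = α := by rw [hp'def, one_div_one_div]
  have hppp' : p < p' := by
    rw [hp'def, lt_div_iff₀ hα0]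
    calc p * α < p * (1/p) := by exact mul_lt_mul_of_pos_left hαp hp0
      _ = 1 := by field_simp
  set θ : ℝ := 1/q + 1/p' with hθ
  have hθ1 : 1 < θ := by rw [hθ, hinv, hα]; linarith [hpq]
  have hθ0 : 0 < θ := by linarith
  clear_value α p' θ
  -- summable tail constant
  have hsummable : Summable (fun k : ℕ => (4/((k:ℝ)+1))^θ) := by
    have h1 : Summable (fun n : ℕ => 1/(n:ℝ)^θ) := Real.summable_one_div_nat_rpow.mpr hθ1
    have h2 : Summable ((fun n : ℕ => 1/(n:ℝ)^θ) ∘ Nat.succ) :=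
      h1.comp_injective Nat.succ_injective
    have h3 : Summable (fun k : ℕ => 1/((k:ℝ)+1)^θ) := by
      have : ((fun n : ℕ => 1/(n:ℝ)^θ) ∘ Nat.succ) = fun k : ℕ => 1/((k:ℝ)+1)^θ := by
        funext k
        simp only [Function.comp]
        push_cast
        ring_nf
      rwa [this] at h2
    have h4 := h3.mul_left ((4:ℝ)^θ)
    have : (fun k : ℕ => (4:ℝ)^θ * (1/((k:ℝ)+1)^θ)) = fun k : ℕ => (4/((k:ℝ)+1))^θ := by
      funext k
      rw [Real.div_rpow (by norm_num) (by positivity)]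
      ring
    rwa [this] at h4
  set CΘ : ℝ := ∑' k : ℕ, (4/((k:ℝ)+1))^θ with hCΘ
  have hCΘ0 : 0 ≤ CΘ := tsum_nonneg (fun k => by positivity)
  have hpartial : ∀ m : ℕ, ∑ k ∈ Finset.range m, (4/((k:ℝ)+1))^θ ≤ CΘ :=
    fun m => Summable.sum_le_tsum _ (fun k _ => by positivity) hsummable
  clear_value CΘ
  -- bound for g on [A,B]
  obtain ⟨M0, hM0⟩ := isCompact_Icc.exists_bound_of_continuousOn hg
  set M : ℝ := max M0 0 with hM
  have hMg : ∀ y ∈ Set.Icc A B, |g y| ≤ M := fun y hy => le_trans (hM0 y hy) (le_max_left _ _)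
  have hM0' : 0 ≤ M := le_max_right _ _
  clear_value M
  -- q-variation chain bound for g
  set Gq : ℝ := (pVar q A B g).toReal with hGqdef
  have hGq0 : 0 ≤ Gq := ENNReal.toReal_nonneg
  have Hgchain : ∀ (x : ℕ → ℝ) (N : ℕ), (∀ i, i < N → x i ≤ x (i+1)) →
      (∀ i, i ≤ N → x i ∈ Set.Icc A B) →
      ∑ i ∈ Finset.range N, |g (x (i+1)) - g (x i)| ^ q ≤ Gq := by
    intro x N h1 h2
    rw [hGqdef, ← ENNReal.ofReal_le_iff_le_toReal hgq]
    exact pVar_chain_bound q A B hq0 g x N h1 h2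
  clear_value Gq
  -- p-variation chain bounds for f n
  set K' : ℝ := max K 0 with hK'def
  have hK'0 : 0 ≤ K' := le_max_right _ _
  have Hfchain : ∀ n (x : ℕ → ℝ) (N : ℕ), (∀ i, i < N → x i ≤ x (i+1)) →
      (∀ i, i ≤ N → x i ∈ Set.Icc A B) →
      ∑ i ∈ Finset.range N, |f n (x (i+1)) - f n (x i)| ^ p ≤ K' ^ p := by
    intro n x N h1 h2
    have hv : pVar p A B (f n) ≤ ENNReal.ofReal (K' ^ p) := by
      have e1 : pVar p A B (f n) = (pVar p A B (f n) ^ (1/p)) ^ p := by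
        rw [← ENNReal.rpow_mul, one_div, inv_mul_cancel₀ hp0.ne', ENNReal.rpow_one]
      rw [e1, ← ENNReal.ofReal_rpow_of_nonneg hK'0 hp0.le]
      apply ENNReal.rpow_le_rpow _ hp0.le
      exact le_trans (hK n) (ENNReal.ofReal_le_ofReal (le_max_left _ _))
    have h3 := le_trans (pVar_chain_bound p A B hp0 (f n) x N h1 h2) hv
    exact (ENNReal.ofReal_le_ofReal_iff (by positivity)).mp h3
  -- pointwise convergence on [A,B]
  have htendpt : ∀ y ∈ Set.Icc A B,
      Filter.Tendsto (fun n => f n y) Filter.atTop (nhds (f₀ y)) := by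
    intro y hy
    rw [Metric.tendsto_atTop]
    intro ε hε
    obtain ⟨N, hN⟩ := hunif (ε/2) (by linarith)
    refine ⟨N, fun n hn => ?_⟩
    have hyb := hN n hn y hy
    rw [Real.dist_eq]
    linarith
  -- p-variation chain bound for f₀
  have Hf0chain : ∀ (x : ℕ → ℝ) (N : ℕ), (∀ i, i < N → x i ≤ x (i+1)) →
      (∀ i, i ≤ N → x i ∈ Set.Icc A B) →
      ∑ i ∈ Finset.range N, |f₀ (x (i+1)) - f₀ (x i)| ^ p ≤ K' ^ p := by
    intro x N h1 h2
    have htend : Filter.Tendsto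
        (fun n => ∑ i ∈ Finset.range N, |f n (x (i+1)) - f n (x i)| ^ p)
        Filter.atTop (nhds (∑ i ∈ Finset.range N, |f₀ (x (i+1)) - f₀ (x i)| ^ p)) := by
      apply tendsto_finset_sum
      intro i hi
      have hii := Finset.mem_range.mp hi
      exact (((htendpt (x (i+1)) (h2 (i+1) (by omega))).sub
        (htendpt (x i) (h2 i (by omega)))).abs).rpow_const (Or.inr hp0.le)
    exact le_of_tendsto' htend (fun n => Hfchain n x N h1 h2)
  clear_value K'
  -- p'-variation chain bound for f n - f₀, given a uniform bound t
  set Kp2 : ℝ := 2^p * (K'^p + K'^p) with hKp2def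
  have hKp20 : 0 ≤ Kp2 := by positivity
  have Hhchain : ∀ n (t : ℝ), 0 < t → (∀ y ∈ Set.Icc A B, |f n y - f₀ y| ≤ t) →
      ∀ (x : ℕ → ℝ) (N : ℕ), (∀ i, i < N → x i ≤ x (i+1)) →
      (∀ i, i ≤ N → x i ∈ Set.Icc A B) →
      ∑ i ∈ Finset.range N,
        |(fun y => f n y - f₀ y) (x (i+1)) - (fun y => f n y - f₀ y) (x i)| ^ p'
        ≤ (2*t)^(p'-p) * Kp2 := by
    intro n t ht hft x N h1 h2
    have step1 : ∀ i ∈ Finset.range N,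
        |(fun y => f n y - f₀ y) (x (i+1)) - (fun y => f n y - f₀ y) (x i)| ^ p'
        ≤ (2*t)^(p'-p) *
          (2^p * (|f n (x (i+1)) - f n (x i)|^p + |f₀ (x (i+1)) - f₀ (x i)|^p)) := by
      intro i hi
      have hii := Finset.mem_range.mp hi
      simp only []
      set a : ℝ := |(f n (x (i+1)) - f₀ (x (i+1))) - (f n (x i) - f₀ (x i))| with hadef
      have ha0 : 0 ≤ a := abs_nonneg _
      have hat : a ≤ 2*t := by
        have u1 := hft (x (i+1)) (h2 (i+1) (by omega))
        have u2 := hft (x i) (h2 i (by omega))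
        calc a ≤ |f n (x (i+1)) - f₀ (x (i+1))| + |f n (x i) - f₀ (x i)| := abs_sub _ _
          _ ≤ 2*t := by linarith
      have hinterp : a ^ p' ≤ (2*t)^(p'-p) * a^p :=
        rpow_interp a (2*t) p p' ha0 hat hp0 hppp'
      refine le_trans hinterp (mul_le_mul_of_nonneg_left ?_ (by positivity))
      have habc : a ≤ |f n (x (i+1)) - f n (x i)| + |f₀ (x (i+1)) - f₀ (x i)| := by
        rw [hadef, show (f n (x (i+1)) - f₀ (x (i+1))) - (f n (x i) - f₀ (x i))
          = (f n (x (i+1)) - f n (x i)) - (f₀ (x (i+1)) - f₀ (x i)) by ring]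
        exact abs_sub _ _
      calc a^p ≤ (|f n (x (i+1)) - f n (x i)| + |f₀ (x (i+1)) - f₀ (x i)|)^p :=
            Real.rpow_le_rpow ha0 habc hp0.le
        _ ≤ 2^p * (|f n (x (i+1)) - f n (x i)|^p + |f₀ (x (i+1)) - f₀ (x i)|^p) :=
            rpow_add_le _ _ p (abs_nonneg _) (abs_nonneg _) hp0.le
    calc ∑ i ∈ Finset.range N,
          |(fun y => f n y - f₀ y) (x (i+1)) - (fun y => f n y - f₀ y) (x i)| ^ p'
        ≤ ∑ i ∈ Finset.range N, (2*t)^(p'-p) *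
            (2^p * (|f n (x (i+1)) - f n (x i)|^p + |f₀ (x (i+1)) - f₀ (x i)|^p)) :=
          Finset.sum_le_sum step1
      _ = (2*t)^(p'-p) * (2^p * ((∑ i ∈ Finset.range N, |f n (x (i+1)) - f n (x i)|^p)
            + ∑ i ∈ Finset.range N, |f₀ (x (i+1)) - f₀ (x i)|^p)) := by
          rw [← Finset.sum_add_distrib, ← Finset.mul_sum, ← Finset.mul_sum]
      _ ≤ (2*t)^(p'-p) * Kp2 := by
          apply mul_le_mul_of_nonneg_left _ (by positivity)
          rw [hKp2def]
          apply mul_le_mul_of_nonneg_left _ (by positivity)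
          have b1 := Hfchain n x N h1 h2
          have b2 := Hf0chain x N h1 h2
          linarith
  -- the key quantitative function
  clear_value Kp2
  set ψ : ℝ → ℝ := fun t => 2*M*t + Gq^(1/q) * ((2*t)^(p'-p) * Kp2)^(1/p') * CΘ with hψdef
  clear_value ψ
  -- ψ tends to 0 at 0
  have hψtend : Filter.Tendsto ψ (nhds 0) (nhds 0) := by
    have l1 : Filter.Tendsto (fun t : ℝ => 2*M*t) (nhds 0) (nhds 0) := by
      have := (tendsto_id (x := nhds (0:ℝ))).const_mul (2*M)
      simpa using this
    have l2 : Filter.Tendsto (fun t : ℝ => 2*t) (nhds (0:ℝ)) (nhds 0) := by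
      have := (tendsto_id (x := nhds (0:ℝ))).const_mul 2
      simpa using this
    have l3 : Filter.Tendsto (fun t : ℝ => (2*t)^(p'-p)) (nhds 0) (nhds 0) := by
      have := l2.rpow_const (p := p'-p) (Or.inr (by linarith))
      rwa [Real.zero_rpow (sub_pos.mpr hppp').ne'] at this
    have l4 : Filter.Tendsto (fun t : ℝ => (2*t)^(p'-p) * Kp2) (nhds 0) (nhds 0) := by
      have := l3.mul_const Kp2
      simpa using this
    have l5 : Filter.Tendsto (fun t : ℝ => ((2*t)^(p'-p) * Kp2)^(1/p')) (nhds 0) (nhds 0) := by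
      have := l4.rpow_const (p := 1/p') (Or.inr (one_div_pos.mpr hp'0).le)
      rwa [Real.zero_rpow (one_div_pos.mpr hp'0).ne'] at this
    have l6 : Filter.Tendsto (fun t : ℝ => Gq^(1/q) * ((2*t)^(p'-p) * Kp2)^(1/p') * CΘ)
        (nhds 0) (nhds 0) := by
      have h6 := (l5.const_mul (Gq^(1/q))).mul_const CΘ
      rwa [show Gq^(1/q) * 0 * CΘ = 0 by ring] at h6
    rw [hψdef]
    have l7 := l1.add l6
    rwa [show (0:ℝ) + 0 = 0 by ring] at l7
  rw [Metric.tendsto_atTop]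
  intro ε hε
  -- choose t > 0 with ψ t < ε/2
  have hev : ∀ᶠ t in nhdsWithin (0:ℝ) (Set.Ioi 0), ψ t < ε/2 :=
    (hψtend.mono_left nhdsWithin_le_nhds).eventually (gt_mem_nhds (by linarith))
  obtain ⟨t, hψt, ht0⟩ := (hev.and (eventually_mem_nhdsWithin)).exists
  rw [Set.mem_Ioi] at ht0
  obtain ⟨N, hN⟩ := hunif t ht0
  refine ⟨N, fun n hn => ?_⟩
  have hft : ∀ y ∈ Set.Icc A B, |f n y - f₀ y| ≤ t := hN n hn
  -- get the two Young-integral approximations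
  obtain ⟨δ₁, hδ₁0, hδ₁⟩ := hI n (ε/4) (by linarith)
  obtain ⟨δ₀, hδ₀0, hδ₀⟩ := hI₀ (ε/4) (by linarith)
  set δ : ℝ := min δ₁ δ₀ with hδdef
  have hδ0 : 0 < δ := lt_min hδ₁0 hδ₀0
  have hδle1 : δ ≤ δ₁ := by rw [hδdef]; exact min_le_left _ _
  have hδle0 : δ ≤ δ₀ := by rw [hδdef]; exact min_le_right _ _
  clear_value δ
  -- uniform partition with mesh < δ
  obtain ⟨m, hm⟩ := exists_nat_gt ((B-A)/δ)
  have hmpos : 0 < m := by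
    rcases Nat.eq_zero_or_pos m with h0 | h
    · subst h0
      simp only [Nat.cast_zero] at hm
      have : 0 < (B-A)/δ := div_pos (by linarith) hδ0
      linarith
    · exact h
  have hmR : (0:ℝ) < m := by exact_mod_cast hmpos
  set xN : ℕ → ℝ := fun i => A + (B-A) * i / m with hxNdef
  have hx0 : xN 0 = A := by simp [hxNdef]
  have hxm : xN m = B := by
    simp only [hxNdef]
    field_simp
    ring
  have hstep : ∀ i : ℕ, xN (i+1) - xN i = (B-A)/m := by
    intro i
    simp only [hxNdef]
    push_cast
    field_simp
    ring
  clear_value xN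
  have hmesh : (B-A)/m < δ := by
    rw [div_lt_iff₀ hmR]
    have := (div_lt_iff₀ hδ0).mp hm
    linarith
  have hBA : (0:ℝ) ≤ B - A := by linarith
  have hchain : ∀ i : ℕ, xN i ≤ xN (i+1) := by
    intro i
    have h3 := hstep i
    have h2 : 0 ≤ (B-A)/(m:ℝ) := div_nonneg hBA hmR.le
    linarith
  have hchainmono : ∀ i j : ℕ, i ≤ j → xN i ≤ xN j := by
    intro i j hij
    induction j with
    | zero => simp at hij; simp [hij]
    | succ j ihj =>
        rcases Nat.lt_or_ge i (j+1) with hlt | hge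
        · exact le_trans (ihj (by omega)) (hchain j)
        · have : i = j + 1 := by omega
          simp [this]
  have hicc : ∀ i : ℕ, i ≤ m → xN i ∈ Set.Icc A B := by
    intro i hi
    constructor
    · rw [← hx0]; exact hchainmono 0 i (by omega)
    · rw [← hxm]; exact hchainmono i m hi
  -- the Fin partition
  set xF : Fin (m+1) → ℝ := fun i => xN i.val with hxFdef
  have hpart : IsPartition A B xF := by
    refine ⟨?_, ?_, ?_⟩
    · rw [Fin.monotone_iff_le_succ]
      intro i
      exact hchain i.val
    · simp only [hxFdef]
      have : ((0 : Fin (m+1)) : ℕ) = 0 := rfl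
      rw [this, hx0]
    · simp only [hxFdef]
      have : ((Fin.last m : Fin (m+1)) : ℕ) = m := rfl
      rw [this, hxm]
  have hmesh1 : ∀ i : Fin m, xF i.succ - xF i.castSucc < δ₁ := by
    intro i
    have : xF i.succ - xF i.castSucc = (B-A)/m := hstep i.val
    rw [this]
    exact lt_of_lt_of_le hmesh hδle1
  have hmesh0 : ∀ i : Fin m, xF i.succ - xF i.castSucc < δ₀ := by
    intro i
    have : xF i.succ - xF i.castSucc = (B-A)/m := hstep i.val
    rw [this]
    exact lt_of_lt_of_le hmesh hδle0
  -- sums as RS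
  have hfin : ∀ F : ℝ → ℝ,
      (∑ i : Fin m, g (xF i.castSucc) * (F (xF i.succ) - F (xF i.castSucc)))
        = RS g F xN m := by
    intro F
    rw [RS, ← Fin.sum_univ_eq_sum_range (fun i => g (xN i) * (F (xN (i+1)) - F (xN i))) m]
    apply Finset.sum_congr rfl
    intro i _
    rfl
  have hSn := hδ₁ m xF hpart hmesh1
  have hS0 := hδ₀ m xF hpart hmesh0
  rw [hfin (f n)] at hSn
  rw [hfin f₀] at hS0
  -- difference of Riemann sums
  have hRSsub : RS g (f n) xN m - RS g f₀ xN m = RS g (fun y => f n y - f₀ y) xN m := by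
    rw [RS, RS, RS, ← Finset.sum_sub_distrib]
    apply Finset.sum_congr rfl
    intro i _
    ring
  -- Young bound on the difference
  have hyoung := young_max A B g (fun y => f n y - f₀ y) q p' Gq ((2*t)^(p'-p) * Kp2)
    hq0 hp'0 hGq0 (by positivity) Hgchain (Hhchain n t ht0 hft) m xN
    (fun i _ => hchain i) hicc
  rw [← hθ] at hyoung
  have hbd : |RS g (fun y => f n y - f₀ y) xN m| ≤ ψ t := by
    have hAicc : A ∈ Set.Icc A B := ⟨le_refl _, hAB.le⟩
    have hBicc : B ∈ Set.Icc A B := ⟨hAB.le, le_refl _⟩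
    have hgA : |g (xN 0)| ≤ M := by rw [hx0]; exact hMg A hAicc
    have hhAB : |(fun y => f n y - f₀ y) (xN m) - (fun y => f n y - f₀ y) (xN 0)| ≤ 2*t := by
      simp only [hx0, hxm]
      calc |(f n B - f₀ B) - (f n A - f₀ A)|
          ≤ |f n B - f₀ B| + |f n A - f₀ A| := abs_sub _ _
        _ ≤ 2*t := by
            have := hft B hBicc
            have := hft A hAicc
            linarith [hft B hBicc, hft A hAicc]
    have htail : Gq^(1/q) * ((2*t)^(p'-p) * Kp2)^(1/p')
        * (∑ k ∈ Finset.range m, (4/((k:ℝ)+1))^θ)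
        ≤ Gq^(1/q) * ((2*t)^(p'-p) * Kp2)^(1/p') * CΘ := by
      apply mul_le_mul_of_nonneg_left (hpartial m) (by positivity)
    calc |RS g (fun y => f n y - f₀ y) xN m|
        = |(RS g (fun y => f n y - f₀ y) xN m
            - g (xN 0) * ((fun y => f n y - f₀ y) (xN m) - (fun y => f n y - f₀ y) (xN 0)))
          + g (xN 0) * ((fun y => f n y - f₀ y) (xN m) - (fun y => f n y - f₀ y) (xN 0))| := by
          congr 1
          ring
      _ ≤ |RS g (fun y => f n y - f₀ y) xN m
            - g (xN 0) * ((fun y => f n y - f₀ y) (xN m) - (fun y => f n y - f₀ y) (xN 0))|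
          + |g (xN 0) * ((fun y => f n y - f₀ y) (xN m) - (fun y => f n y - f₀ y) (xN 0))| :=
          abs_add_le _ _
      _ = |RS g (fun y => f n y - f₀ y) xN m
            - g (xN 0) * ((fun y => f n y - f₀ y) (xN m) - (fun y => f n y - f₀ y) (xN 0))|
          + |g (xN 0)| * |(fun y => f n y - f₀ y) (xN m) - (fun y => f n y - f₀ y) (xN 0)| := by
          rw [abs_mul]
      _ ≤ Gq^(1/q) * ((2*t)^(p'-p) * Kp2)^(1/p')
            * (∑ k ∈ Finset.range m, (4/((k:ℝ)+1))^θ) + M * (2*t) := by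
          apply add_le_add hyoung
          exact mul_le_mul hgA hhAB (abs_nonneg _) hM0'
      _ ≤ Gq^(1/q) * ((2*t)^(p'-p) * Kp2)^(1/p') * CΘ + M * (2*t) := by
          linarith [htail]
      _ = ψ t := by rw [hψdef]; ring
  -- final assembly
  rw [Real.dist_eq]
  have key : I n - I₀ = -(RS g (f n) xN m - I n) + (RS g (f n) xN m - RS g f₀ xN m)
      + (RS g f₀ xN m - I₀) := by ring
  rw [key]
  have a1 : |-(RS g (f n) xN m - I n) + (RS g (f n) xN m - RS g f₀ xN m)
      + (RS g f₀ xN m - I₀)|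
      ≤ |(-(RS g (f n) xN m - I n)) + (RS g (f n) xN m - RS g f₀ xN m)|
        + |RS g f₀ xN m - I₀| := abs_add_le _ _
  have a2 : |(-(RS g (f n) xN m - I n)) + (RS g (f n) xN m - RS g f₀ xN m)|
      ≤ |RS g (f n) xN m - I n| + |RS g (f n) xN m - RS g f₀ xN m| := by
    have := abs_add_le (-(RS g (f n) xN m - I n)) (RS g (f n) xN m - RS g f₀ xN m)
    rwa [abs_neg] at this
  have a3 : |RS g (f n) xN m - RS g f₀ xN m| ≤ ψ t := by rw [hRSsub]; exact hbd
  linarith [hSn, hS0, hψt]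
end

section
/- Let $f : \mathbb{R}^n \to \mathbb{R}$ be continuous, weakly differentiable in each variable, and suppose that for each $k$ and each $i > k$ the function $x \mapsto \nabla^w_i f(c_1, \ldots, c_k, x, \ldots, x, \ldots, x)|_{x_i = x}$ (evaluating all coordinates after position $k$ at $x$) has finite $q$-variation on $[-M,M]$ for every $M > 0$, with a bound uniform in $(c_1, \ldots, c_k)$ ranging over compacts. Then the function $G(t,x) := \sum_{k=0}^{n-1} \mathbb{1}_{\{t_k \le t < t_{k+1}\}} \sum_{i=k+1}^n \nabla^w_i f(c(t_1-), \ldots, c(t_k-), x, \ldots, x)|_{x_i = x}$, defined on $[0,T] \times [-M,M]$ for a fixed path $c$, has finite joint left $(p,q)$-variation $LV^{p,q}(G) < \infty$ for every $p \ge 1$, with the same $q$. -/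
open Set Finset Filter MeasureTheory
open scoped ENNReal NNReal

section helpers

lemma mono_step_var {N : ℕ} (t : Fin (N+1) → ℝ) (ht : Monotone t) (a : ℝ) :
    ∑ i : Fin N, |(if a ≤ t i.succ then (1:ℝ) else 0)
      - (if a ≤ t i.castSucc then (1:ℝ) else 0)| ≤ 1 := by
  set u : ℕ → ℝ := fun i => if a ≤ t ⟨min i N, by omega⟩ then (1:ℝ) else 0 with hu
  have hterm : ∀ i : Fin N, |(if a ≤ t i.succ then (1:ℝ) else 0)
      - (if a ≤ t i.castSucc then (1:ℝ) else 0)| = u (i.val + 1) - u i.val := by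
    intro i
    have h1 : t i.succ = t ⟨min (i.val+1) N, by omega⟩ := by
      congr 1; ext; simp [Nat.min_eq_left (by omega : i.val + 1 ≤ N)]
    have h2 : t i.castSucc = t ⟨min i.val N, by omega⟩ := by
      congr 1; ext; simp [Nat.min_eq_left (by omega : i.val ≤ N)]
    have hle : t i.castSucc ≤ t i.succ := ht (by simp [Fin.le_def])
    rw [hu]; simp only [← h1, ← h2]
    split_ifs with hA hB hB
    · simp
    · simp
    · exact absurd (le_trans hB hle) hA
    · simp
  calc ∑ i : Fin N, |(if a ≤ t i.succ then (1:ℝ) else 0)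
      - (if a ≤ t i.castSucc then (1:ℝ) else 0)|
      = ∑ i : Fin N, (u (i.val + 1) - u i.val) :=
        Finset.sum_congr rfl fun i _ => hterm i
    _ = ∑ i ∈ Finset.range N, (u (i + 1) - u i) :=
        Fin.sum_univ_eq_sum_range (fun i => u (i+1) - u i) N
    _ = u N - u 0 := Finset.sum_range_sub u N
    _ ≤ 1 := by
        have key : ∀ i : ℕ, 0 ≤ u i ∧ u i ≤ 1 := by
          intro i
          rw [hu]
          rcases le_or_gt a (t ⟨min i N, by omega⟩) with h | h
          · simp [h]
          · simp [not_le.mpr h]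
        have h1 := (key N).2
        have h2 := (key 0).1
        linarith

lemma indicator_var_le {N : ℕ} (t : Fin (N+1) → ℝ) (ht : Monotone t) {a b : ℝ} (hab : a ≤ b) :
    ∑ i : Fin N, |(if a ≤ t i.succ ∧ t i.succ < b then (1:ℝ) else 0)
      - (if a ≤ t i.castSucc ∧ t i.castSucc < b then (1:ℝ) else 0)| ≤ 2 := by
  have key : ∀ s : ℝ, (if a ≤ s ∧ s < b then (1:ℝ) else 0)
      = (if a ≤ s then (1:ℝ) else 0) - (if b ≤ s then (1:ℝ) else 0) := by
    intro s
    by_cases h1 : a ≤ s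
    · by_cases h2 : b ≤ s
      · have h3 : ¬ s < b := not_lt.2 h2
        simp [h1, h2, h3]
      · have h3 : s < b := not_le.1 h2
        simp [h1, h2, h3]
    · have h3 : ¬ (a ≤ s ∧ s < b) := fun h => h1 h.1
      have h2 : ¬ b ≤ s := fun h => h1 (hab.trans h)
      simp [h1, h2, h3]
  have hle : ∀ i : Fin N, |(if a ≤ t i.succ ∧ t i.succ < b then (1:ℝ) else 0)
      - (if a ≤ t i.castSucc ∧ t i.castSucc < b then (1:ℝ) else 0)|
      ≤ |(if a ≤ t i.succ then (1:ℝ) else 0) - (if a ≤ t i.castSucc then (1:ℝ) else 0)|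
      + |(if b ≤ t i.succ then (1:ℝ) else 0) - (if b ≤ t i.castSucc then (1:ℝ) else 0)| := by
    intro i
    rw [key, key]
    have h : (if a ≤ t i.succ then (1:ℝ) else 0) - (if b ≤ t i.succ then (1:ℝ) else 0)
        - ((if a ≤ t i.castSucc then (1:ℝ) else 0) - (if b ≤ t i.castSucc then (1:ℝ) else 0))
        = ((if a ≤ t i.succ then (1:ℝ) else 0) - (if a ≤ t i.castSucc then (1:ℝ) else 0))
        - ((if b ≤ t i.succ then (1:ℝ) else 0) - (if b ≤ t i.castSucc then (1:ℝ) else 0)) := by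
      ring
    rw [h]
    exact abs_sub _ _
  calc _ ≤ ∑ i : Fin N,
        (|(if a ≤ t i.succ then (1:ℝ) else 0) - (if a ≤ t i.castSucc then (1:ℝ) else 0)|
        + |(if b ≤ t i.succ then (1:ℝ) else 0) - (if b ≤ t i.castSucc then (1:ℝ) else 0)|) :=
          Finset.sum_le_sum fun i _ => hle i
    _ = _ + _ := Finset.sum_add_distrib
    _ ≤ 1 + 1 := add_le_add (mono_step_var t ht a) (mono_step_var t ht b)
    _ = 2 := by norm_num

lemma lp_minkowski {ι : Type*} (s : Finset ι) {m : ℕ} (f : ι → Fin m → ℝ≥0∞) {q : ℝ} (hq : 1 ≤ q) :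
    (∑ j : Fin m, (∑ k ∈ s, f k j) ^ q) ^ (1/q) ≤ ∑ k ∈ s, (∑ j : Fin m, (f k j) ^ q) ^ (1/q) := by
  classical
  have hq0 : 0 < q := lt_of_lt_of_le one_pos hq
  induction s using Finset.induction with
  | empty =>
      simp only [Finset.sum_empty, ENNReal.zero_rpow_of_pos hq0, Finset.sum_const_zero,
        ENNReal.zero_rpow_of_pos (show (0:ℝ) < 1/q by positivity), le_refl]
  | @insert a s' ha ih =>
      simp only [Finset.sum_insert ha]
      calc (∑ j : Fin m, (f a j + ∑ k ∈ s', f k j) ^ q) ^ (1/q)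
          ≤ (∑ j : Fin m, (f a j) ^ q) ^ (1/q)
            + (∑ j : Fin m, (∑ k ∈ s', f k j) ^ q) ^ (1/q) := ENNReal.Lp_add_le _ _ _ hq
        _ ≤ _ := add_le_add le_rfl ih

lemma sum_rpow_le_rpow_sum'' {ι : Type*} (s : Finset ι) (a : ι → ℝ≥0∞) {p : ℝ} (hp : 1 ≤ p) :
    ∑ i ∈ s, a i ^ p ≤ (∑ i ∈ s, a i) ^ p := by
  classical
  induction s using Finset.induction with
  | empty => simp
  | @insert b s' hb ih =>
      rw [Finset.sum_insert hb, Finset.sum_insert hb]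
      calc a b ^ p + ∑ i ∈ s', a i ^ p
          ≤ a b ^ p + (∑ i ∈ s', a i) ^ p := add_le_add le_rfl ih
        _ ≤ (a b + ∑ i ∈ s', a i) ^ p := ENNReal.add_rpow_le_rpow_add _ _ hp

lemma sum_le_pVar_s16 {m : ℕ} (x : Fin (m+1) → ℝ) {a b a' b' : ℝ} (hx : IsPartition a b x)
    (ha : a' ≤ a) (hb : b ≤ b') (q : ℝ) (g : ℝ → ℝ) :
    ∑ j : Fin m, (ENNReal.ofReal |g (x j.succ) - g (x j.castSucc)|) ^ q ≤ pVar q a' b' g := by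
  classical
  obtain ⟨hmono, hx0, hxl⟩ := hx
  set y : Fin (m+3) → ℝ := Fin.cons a' (Fin.snoc x b') with hy
  have hysucc : ∀ i : Fin (m+2), y i.succ = (Fin.snoc x b' : Fin (m+2) → ℝ) i := by
    intro i; rw [hy]; exact Fin.cons_succ _ _ _
  have hy0 : y 0 = a' := by rw [hy]; exact Fin.cons_zero _ _
  have hylast : y (Fin.last (m+2)) = b' := by
    have h : (Fin.last (m+2)) = (Fin.last (m+1)).succ := rfl
    rw [h, hysucc, Fin.snoc_last]
  have hymono : Monotone y := by
    rw [Fin.monotone_iff_le_succ]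
    intro i
    induction i using Fin.cases with
    | zero =>
        have h2 : y (Fin.succ 0) = x 0 := by
          have h : (Fin.succ 0 : Fin (m+3)) = (Fin.castSucc (0 : Fin (m+1))).succ := rfl
          rw [h, hysucc, Fin.snoc_castSucc]
        have h1 : y (Fin.castSucc 0) = a' := hy0
        rw [h1, h2, hx0]; exact ha
    | succ j =>
        have h1 : y j.succ.castSucc = x j := by
          rw [← Fin.succ_castSucc, hysucc, Fin.snoc_castSucc]
        induction j using Fin.lastCases with
        | last =>
            have h2 : y (Fin.last m).succ.succ = b' := by
              rw [hysucc]
              have h : ((Fin.last m).succ : Fin (m+2)) = Fin.last (m+1) := rfl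
              rw [h, Fin.snoc_last]
            rw [h1, h2, hxl]; exact hb
        | cast l =>
            have h2 : y l.castSucc.succ.succ = x l.succ := by
              rw [hysucc, Fin.succ_castSucc, Fin.snoc_castSucc]
            rw [h1, h2]
            exact hmono (Fin.castSucc_le_succ l)
  have hpart : IsPartition a' b' y := ⟨hymono, hy0, hylast⟩
  set F : Fin (m+2) → ℝ≥0∞ :=
    fun i => (ENNReal.ofReal |g (y i.succ) - g (y i.castSucc)|) ^ q with hF
  set e : Fin m → Fin (m+2) := fun j => (j.succ).castSucc with he
  have hterm : ∀ j : Fin m,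
      (ENNReal.ofReal |g (x j.succ) - g (x j.castSucc)|) ^ q = F (e j) := by
    intro j
    have h1 : y (e j).succ = x j.succ := by
      rw [he]; rw [hysucc]; exact Fin.snoc_castSucc _ _ _
    have h2 : y (e j).castSucc = x j.castSucc := by
      have h : (e j).castSucc = (Fin.castSucc (Fin.castSucc j) : Fin (m+2)).succ := by
        rw [he]; ext; simp
      rw [h, hysucc]; exact Fin.snoc_castSucc _ _ _
    rw [hF]; dsimp only; rw [h1, h2]
  have einj : Function.Injective e := by
    intro u v huv
    have h := congrArg Fin.val huv
    simp [he] at h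
    exact Fin.ext h
  calc ∑ j : Fin m, (ENNReal.ofReal |g (x j.succ) - g (x j.castSucc)|) ^ q
      = ∑ j : Fin m, F (e j) := Finset.sum_congr rfl fun j _ => hterm j
    _ = ∑ i ∈ Finset.univ.image e, F i :=
        (Finset.sum_image (fun u _ v _ h => einj h)).symm
    _ ≤ ∑ i : Fin (m+2), F i :=
        Finset.sum_le_sum_of_subset (Finset.subset_univ _)
    _ ≤ pVar q a' b' g :=
        le_iSup_of_le (m+2) (le_iSup_of_le y (le_iSup_of_le hpart le_rfl))

end helpers

/-- For a continuous `f : ℝⁿ → ℝ` with weak partial derivatives `d i` (in the sense of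
integration by parts in each variable) such that each composed map
`x ↦ d i (c(t₁-), …, c(t_k-), x, …, x)` (for `i ≥ k`) has finite `q`-variation on compacts
uniformly over path values in compacts, the piecewise-in-time function
`G(t,x) = ∑_k 1_{[t_k,t_{k+1})}(t) ∑_{i ≥ k} d i (c(t₁-), …, c(t_k-), x, …, x)`
has finite joint left `(p,q)`-variation for every `p ≥ 1`. -/
theorem stmt16 (n : ℕ) (hn : 0 < n) (T M : ℝ) (hT : 0 < T) (hM : 0 < M)
    (q : ℝ) (hq : 1 ≤ q)
    (f : (Fin n → ℝ) → ℝ) (hf : Continuous f)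
    (d : Fin n → (Fin n → ℝ) → ℝ)
    (hweak : ∀ (i : Fin n) (y : Fin n → ℝ) (φ : ℝ → ℝ), ContDiff ℝ 1 φ →
      HasCompactSupport φ →
      ∫ s, f (Function.update y i s) * deriv φ s = -∫ s, d i (Function.update y i s) * φ s)
    (tp : ℕ → ℝ) (htp : StrictMonoOn tp (Set.Iic n)) (htp0 : tp 0 = 0) (htpn : tp n = T)
    (c : ℝ → ℝ)
    (hvar : ∀ (k : ℕ) (i : Fin n), k ≤ i.val → ∀ R > (0:ℝ), ∃ K : ℝ, ∀ v : Fin n → ℝ,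
      (∀ j, |v j| ≤ R) →
      pVar q (-R) R (fun x => d i fun j => if j.val < k then v j else x) ≤
        ENNReal.ofReal K) :
    ∀ p : ℝ, 1 ≤ p →
      LV p q 0 T (-M) M (fun t x => ∑ k ∈ Finset.range n,
        if tp k ≤ t ∧ t < tp (k + 1) then
          (∑ i : Fin n, if k ≤ i.val then
            d i (fun j => if j.val < k then Function.leftLim c (tp (j.val + 1)) else x)
          else 0)
        else 0) ≠ ⊤ := by
  intro p hp
  have hq0 : (0:ℝ) < q := lt_of_lt_of_le one_pos hq
  have hp0 : (0:ℝ) < p := lt_of_lt_of_le one_pos hp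
  set v : Fin n → ℝ := fun j => Function.leftLim c (tp (j.val + 1)) with hv
  set R : ℝ := M + ∑ j : Fin n, |v j| with hR
  have hMR : M ≤ R := le_add_of_nonneg_right (Finset.sum_nonneg fun _ _ => abs_nonneg _)
  have hRpos : 0 < R := lt_of_lt_of_le hM hMR
  have hvR : ∀ j : Fin n, |v j| ≤ R := by
    intro j
    have h1 : |v j| ≤ ∑ j : Fin n, |v j| :=
      Finset.single_le_sum (f := fun j : Fin n => |v j|) (fun _ _ => abs_nonneg _)
        (Finset.mem_univ j)
    rw [hR]; linarith
  set F : ℕ → Fin n → ℝ → ℝ := fun k i x =>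
    if k ≤ i.val then d i (fun j => if j.val < k then v j else x) else 0 with hF
  set gg : ℕ → ℝ → ℝ := fun k y => ∑ i : Fin n, F k i y with hgg
  set χ : ℕ → ℝ → ℝ := fun k s => if tp k ≤ s ∧ s < tp (k+1) then (1:ℝ) else 0 with hχ
  set G : ℝ → ℝ → ℝ := fun t x => ∑ k ∈ Finset.range n,
      if tp k ≤ t ∧ t < tp (k + 1) then
        (∑ i : Fin n, if k ≤ i.val then
          d i (fun j => if j.val < k then Function.leftLim c (tp (j.val + 1)) else x)
        else 0)
      else 0 with hG
  set D : ℕ → Fin n → ℝ≥0∞ := fun k i => (pVar q (-R) R (F k i)) ^ (1/q) with hD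
  set C : ℝ≥0∞ := ∑ k ∈ Finset.range n, 2 * ∑ i : Fin n, D k i with hC
  -- `D` is finite
  have hDtop : ∀ k (i : Fin n), D k i ≠ ⊤ := by
    intro k i
    rw [hD]
    apply ENNReal.rpow_ne_top_of_nonneg (by positivity)
    by_cases hki : k ≤ i.val
    · obtain ⟨K, hK⟩ := hvar k i hki R hRpos
      have hb := hK v hvR
      have hFeq : F k i = fun x => d i fun j => if j.val < k then v j else x := by
        rw [hF]; funext x; simp [hki]
      rw [hFeq]
      exact ne_top_of_le_ne_top ENNReal.ofReal_ne_top hb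
    · have hFeq : F k i = fun _ => (0:ℝ) := by
        rw [hF]; funext x; simp [hki]
      rw [hFeq]
      have hz : pVar q (-R) R (fun _ => (0:ℝ)) = 0 := by
        apply le_antisymm _ zero_le
        refine iSup_le fun N => iSup_le fun y => iSup_le fun _ => ?_
        simp [ENNReal.zero_rpow_of_pos hq0]
      rw [hz]; exact ENNReal.zero_ne_top
  have hCtop : C ≠ ⊤ := by
    rw [hC]
    refine (ENNReal.sum_lt_top.2 fun k _ => ?_).ne
    refine ENNReal.mul_lt_top (by norm_num) ?_
    exact ENNReal.sum_lt_top.2 fun i _ => (hDtop k i).lt_top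
  -- the main bound
  have hmain : LV p q 0 T (-M) M G ≤ C := by
    unfold LV
    refine iSup_le fun N => iSup_le fun m => iSup_le fun t => iSup_le fun x =>
      iSup_le fun hpt => iSup_le fun hpx => ?_
    set cc : ℕ → Fin m → ℝ≥0∞ :=
      fun k j => ENNReal.ofReal |gg k (x j.succ) - gg k (x j.castSucc)| with hcc
    -- G as a sum of indicator × space-function
    have hGval : ∀ s y, G s y = ∑ k ∈ Finset.range n, χ k s * gg k y := by
      intro s y
      simp only [hG, hχ, hgg, hF, hv]
      refine Finset.sum_congr rfl fun k _ => ?_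
      split_ifs with h
      · rw [one_mul]
      · rw [zero_mul]
    -- pointwise bound on the rectangular increments
    have hpoint : ∀ (i : Fin N) (j : Fin m),
        ENNReal.ofReal |rectInc G (t i.succ) (t i.castSucc) (x j.succ) (x j.castSucc)|
        ≤ ∑ k ∈ Finset.range n,
            ENNReal.ofReal |χ k (t i.succ) - χ k (t i.castSucc)| * cc k j := by
      intro i j
      have hrect : rectInc G (t i.succ) (t i.castSucc) (x j.succ) (x j.castSucc)
          = ∑ k ∈ Finset.range n, (χ k (t i.succ) - χ k (t i.castSucc))
              * (gg k (x j.succ) - gg k (x j.castSucc)) := by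
        rw [rectInc, hGval, hGval, hGval, hGval]
        rw [← Finset.sum_sub_distrib, ← Finset.sum_sub_distrib, ← Finset.sum_sub_distrib]
        exact Finset.sum_congr rfl fun k _ => by ring
      rw [hrect]
      calc ENNReal.ofReal |∑ k ∈ Finset.range n, (χ k (t i.succ) - χ k (t i.castSucc))
              * (gg k (x j.succ) - gg k (x j.castSucc))|
          ≤ ENNReal.ofReal (∑ k ∈ Finset.range n, |(χ k (t i.succ) - χ k (t i.castSucc))
              * (gg k (x j.succ) - gg k (x j.castSucc))|) :=
            ENNReal.ofReal_le_ofReal (Finset.abs_sum_le_sum_abs _ _)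
        _ = ∑ k ∈ Finset.range n, ENNReal.ofReal |(χ k (t i.succ) - χ k (t i.castSucc))
              * (gg k (x j.succ) - gg k (x j.castSucc))| :=
            ENNReal.ofReal_sum_of_nonneg fun _ _ => abs_nonneg _
        _ = ∑ k ∈ Finset.range n,
              ENNReal.ofReal |χ k (t i.succ) - χ k (t i.castSucc)| * cc k j := by
            refine Finset.sum_congr rfl fun k _ => ?_
            rw [abs_mul, ENNReal.ofReal_mul (abs_nonneg _), hcc]
    -- the row bound
    have hrow : ∀ j : Fin m,
        ∑ i : Fin N, ENNReal.ofReal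
          |rectInc G (t i.succ) (t i.castSucc) (x j.succ) (x j.castSucc)|
        ≤ ∑ k ∈ Finset.range n, 2 * cc k j := by
      intro j
      calc ∑ i : Fin N, ENNReal.ofReal
            |rectInc G (t i.succ) (t i.castSucc) (x j.succ) (x j.castSucc)|
          ≤ ∑ i : Fin N, ∑ k ∈ Finset.range n,
              ENNReal.ofReal |χ k (t i.succ) - χ k (t i.castSucc)| * cc k j :=
            Finset.sum_le_sum fun i _ => hpoint i j
        _ = ∑ k ∈ Finset.range n, (∑ i : Fin N,
              ENNReal.ofReal |χ k (t i.succ) - χ k (t i.castSucc)|) * cc k j := by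
            rw [Finset.sum_comm]
            exact Finset.sum_congr rfl fun k _ => (Finset.sum_mul _ _ _).symm
        _ ≤ ∑ k ∈ Finset.range n, 2 * cc k j := by
            refine Finset.sum_le_sum fun k hk => ?_
            refine mul_le_mul_left ?_ _
            have hab : tp k ≤ tp (k+1) := by
              have hk' : k < n := Finset.mem_range.1 hk
              exact (htp (by simp; omega) (by simp; omega) (by omega)).le
            have hchi : ∑ i : Fin N, |χ k (t i.succ) - χ k (t i.castSucc)| ≤ 2 := by
              simp only [hχ]
              exact indicator_var_le t hpt.1 hab
            calc ∑ i : Fin N, ENNReal.ofReal |χ k (t i.succ) - χ k (t i.castSucc)|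
                = ENNReal.ofReal (∑ i : Fin N, |χ k (t i.succ) - χ k (t i.castSucc)|) :=
                  (ENNReal.ofReal_sum_of_nonneg fun _ _ => abs_nonneg _).symm
              _ ≤ ENNReal.ofReal 2 := ENNReal.ofReal_le_ofReal hchi
              _ = 2 := by norm_num
    -- assemble
    have hpq : p * (q / p) = q := by field_simp
    have hqq : q * (1 / q) = 1 := by field_simp
    calc (∑ j : Fin m, (∑ i : Fin N, (ENNReal.ofReal
            |rectInc G (t i.succ) (t i.castSucc) (x j.succ) (x j.castSucc)|) ^ p) ^ (q/p)) ^ (1/q)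
        ≤ (∑ j : Fin m, (∑ k ∈ Finset.range n, 2 * cc k j) ^ q) ^ (1/q) := by
          refine ENNReal.rpow_le_rpow (Finset.sum_le_sum fun j _ => ?_) (by positivity)
          calc (∑ i : Fin N, (ENNReal.ofReal
                |rectInc G (t i.succ) (t i.castSucc) (x j.succ) (x j.castSucc)|) ^ p) ^ (q/p)
              ≤ ((∑ i : Fin N, ENNReal.ofReal
                |rectInc G (t i.succ) (t i.castSucc) (x j.succ) (x j.castSucc)|) ^ p) ^ (q/p) :=
                ENNReal.rpow_le_rpow (sum_rpow_le_rpow_sum'' _ _ hp) (by positivity)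
            _ = (∑ i : Fin N, ENNReal.ofReal
                |rectInc G (t i.succ) (t i.castSucc) (x j.succ) (x j.castSucc)|) ^ q := by
                rw [← ENNReal.rpow_mul, hpq]
            _ ≤ (∑ k ∈ Finset.range n, 2 * cc k j) ^ q :=
                ENNReal.rpow_le_rpow (hrow j) hq0.le
      _ ≤ ∑ k ∈ Finset.range n, (∑ j : Fin m, (2 * cc k j) ^ q) ^ (1/q) :=
          lp_minkowski (Finset.range n) (fun k j => 2 * cc k j) hq
      _ = ∑ k ∈ Finset.range n, 2 * (∑ j : Fin m, (cc k j) ^ q) ^ (1/q) := by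
          refine Finset.sum_congr rfl fun k _ => ?_
          have h1 : ∀ j : Fin m, (2 * cc k j) ^ q = 2 ^ q * (cc k j) ^ q := fun j =>
            ENNReal.mul_rpow_of_nonneg _ _ hq0.le
          simp only [h1, ← Finset.mul_sum]
          rw [ENNReal.mul_rpow_of_nonneg _ _ (by positivity : (0:ℝ) ≤ 1/q),
            ← ENNReal.rpow_mul, hqq, ENNReal.rpow_one]
      _ ≤ ∑ k ∈ Finset.range n, 2 * ∑ i : Fin n, D k i := by
          refine Finset.sum_le_sum fun k _ => mul_le_mul_right ?_ _
          -- (∑_j cc^q)^{1/q} ≤ ∑_i D k i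
          have hccle : ∀ j : Fin m, cc k j ≤ ∑ i : Fin n,
              ENNReal.ofReal |F k i (x j.succ) - F k i (x j.castSucc)| := by
            intro j
            rw [hcc]
            dsimp only
            have hdiff : gg k (x j.succ) - gg k (x j.castSucc)
                = ∑ i : Fin n, (F k i (x j.succ) - F k i (x j.castSucc)) := by
              rw [hgg, ← Finset.sum_sub_distrib]
            rw [hdiff]
            calc ENNReal.ofReal |∑ i : Fin n, (F k i (x j.succ) - F k i (x j.castSucc))|
                ≤ ENNReal.ofReal (∑ i : Fin n, |F k i (x j.succ) - F k i (x j.castSucc)|) :=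
                  ENNReal.ofReal_le_ofReal (Finset.abs_sum_le_sum_abs _ _)
              _ = ∑ i : Fin n, ENNReal.ofReal |F k i (x j.succ) - F k i (x j.castSucc)| :=
                  ENNReal.ofReal_sum_of_nonneg fun _ _ => abs_nonneg _
          calc (∑ j : Fin m, (cc k j) ^ q) ^ (1/q)
              ≤ (∑ j : Fin m, (∑ i : Fin n,
                  ENNReal.ofReal |F k i (x j.succ) - F k i (x j.castSucc)|) ^ q) ^ (1/q) := by
                refine ENNReal.rpow_le_rpow (Finset.sum_le_sum fun j _ => ?_) (by positivity)
                exact ENNReal.rpow_le_rpow (hccle j) hq0.le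
            _ ≤ ∑ i : Fin n, (∑ j : Fin m,
                  (ENNReal.ofReal |F k i (x j.succ) - F k i (x j.castSucc)|) ^ q) ^ (1/q) :=
                lp_minkowski Finset.univ
                  (fun i j => ENNReal.ofReal |F k i (x j.succ) - F k i (x j.castSucc)|) hq
            _ ≤ ∑ i : Fin n, D k i := by
                refine Finset.sum_le_sum fun i _ => ?_
                rw [hD]
                refine ENNReal.rpow_le_rpow ?_ (by positivity)
                exact sum_le_pVar_s16 x hpx (neg_le_neg hMR) hMR q (F k i)
      _ = C := hC.symm
  exact ne_top_of_le_ne_top hCtop hmain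
end
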